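/- arXiv:1504.01608 — 3 statements merged into one kernel-verified Lean document; each statement's English description precedes it below -/
import Mathlib

section
/- Every natural number n can be written as x^2 + y^2 + ⌊z^2/2⌋ for some integers x, y, z. -/
set_option maxHeartbeats 1600000

open NumberTheorySymbols

/-- rounding: find x with a*x + t = r, |r| ≤ a/2 -/
lemma round_half (a t : ℤ) (ha : 0 < a) : ∃ x r : ℤ, a * x + t = r ∧ 4 * r ^ 2 ≤ a ^ 2 := by
  have h1 : a * (t / a) + t % a = t := Int.mul_ediv_add_emod t a
  have h2 : 0 ≤ t % a := Int.emod_nonneg t (ne_of_gt ha)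
  have h3 : t % a < a := Int.emod_lt_of_pos t ha
  rcases le_or_gt (2 * (t % a)) a with h | h
  · exact ⟨-(t / a), t % a, by linarith [h1], by nlinarith⟩
  · exact ⟨-(t / a) - 1, t % a - a, by linarith [h1], by nlinarith⟩

/-- binary forms of det 1 are sums of two squares of linear forms -/
lemma bin_sum_sq : ∀ (k : ℕ) (B F C : ℤ), B.natAbs + F.natAbs ≤ k → 0 < B →
    B * C - F ^ 2 = 1 →
    ∃ p q r s : ℤ, ∀ y z : ℤ,
      B * y ^ 2 + 2 * F * y * z + C * z ^ 2 = (p * y + q * z) ^ 2 + (r * y + s * z) ^ 2 := by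
  intro k
  induction k using Nat.strong_induction_on with
  | _ k ih =>
  intro B F C hk hB hdet
  by_cases hF : 2 * F.natAbs ≤ B.natAbs
  · have hFabs : 2 * |F| ≤ B := by
      rw [Int.abs_eq_natAbs, ← Int.natAbs_of_nonneg hB.le]
      exact_mod_cast hF
    by_cases hBC : B ≤ C
    · -- terminal : B = 1, F = 0, C = 1
      have h4 : B * B ≤ B * C := mul_le_mul_of_nonneg_left hBC hB.le
      have h5 : 4 * F ^ 2 ≤ B ^ 2 := by nlinarith [abs_nonneg F, sq_abs F]
      have hB1 : B = 1 := by nlinarith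
      have h6 : F ^ 2 = 0 := by nlinarith
      have hF0 : F = 0 := by
        have := sq_eq_zero_iff.mp h6; exact this
      have hC1 : C = 1 := by rw [hB1, hF0] at hdet; linarith [hdet]
      rw [hB1, hF0, hC1]
      exact ⟨1, 0, 0, 1, fun y z => by ring⟩
    · -- swap
      push_neg at hBC
      have hC : 0 < C := by nlinarith
      have hclt : C.natAbs + F.natAbs < k := by
        have : C.natAbs < B.natAbs := Int.natAbs_lt_natAbs_of_nonneg_of_lt hC.le hBC
        omega
      obtain ⟨p, q, r, s, h⟩ := ih (C.natAbs + F.natAbs) hclt C F B le_rfl hC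
        (by linear_combination hdet)
      exact ⟨q, p, s, r, fun y z => by linear_combination h z y⟩
  · -- translate: F' = F + t*B with 2|F'| ≤ B
    push_neg at hF
    have h1 : B * (F / B) + F % B = F := Int.mul_ediv_add_emod F B
    have h2 : 0 ≤ F % B := Int.emod_nonneg F (ne_of_gt hB)
    have h3 : F % B < B := Int.emod_lt_of_pos F hB
    have hFB : B < 2 * |F| := by
      rw [Int.abs_eq_natAbs, ← Int.natAbs_of_nonneg hB.le]
      exact_mod_cast hF
    rcases le_or_gt (2 * (F % B)) B with hc | hc
    · -- t := -(F/B), F' := F % B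
      set t : ℤ := -(F / B) with ht
      have hF' : F + t * B = F % B := by rw [ht]; linarith [h1]
      have habs : |F % B| < |F| := by
        rw [abs_of_nonneg h2]; omega
      have hlt : B.natAbs + (F % B).natAbs < k := by
        have : (F % B).natAbs < F.natAbs := by
          have := Int.natAbs_lt_natAbs_of_nonneg_of_lt (abs_nonneg (F % B)) habs
          simpa [Int.natAbs_abs] using this
        omega
      obtain ⟨p, q, r, s, h⟩ := ih _ hlt B (F % B) (B * t ^ 2 + 2 * F * t + C) le_rfl hB
        (by linear_combination hdet + (F + t*B + F % B) * hF')
      refine ⟨p, q - p * t, r, s - r * t, fun y z => ?_⟩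
      have h7 := h (y - t * z) z
      linear_combination h7 + (2*y*z - 2*t*z^2) * hF'
    · -- t := -(F/B) - 1, F' := F % B - B
      set t : ℤ := -(F / B) - 1 with ht
      have hF' : F + t * B = F % B - B := by rw [ht]; linarith [h1]
      have habs : |F % B - B| < |F| := by
        rw [abs_of_nonpos (by omega)]; omega
      have hlt : B.natAbs + (F % B - B).natAbs < k := by
        have : (F % B - B).natAbs < F.natAbs := by
          have := Int.natAbs_lt_natAbs_of_nonneg_of_lt (abs_nonneg (F % B - B)) habs
          simpa [Int.natAbs_abs] using this
        omega
      obtain ⟨p, q, r, s, h⟩ := ih _ hlt B (F % B - B) (B * t ^ 2 + 2 * F * t + C) le_rfl hB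
        (by linear_combination hdet + (F + t*B + (F % B - B)) * hF')
      refine ⟨p, q - p * t, r, s - r * t, fun y z => ?_⟩
      have h7 := h (y - t * z) z
      linear_combination h7 + (2*y*z - 2*t*z^2) * hF'

/-- a positive binary form attains a small positive value -/
lemma bin_min : ∀ (k : ℕ) (B F C : ℤ), B.natAbs + F.natAbs ≤ k → 0 < B →
    0 < B * C - F ^ 2 →
    ∃ y z m : ℤ, B * y ^ 2 + 2 * F * y * z + C * z ^ 2 = m ∧ 0 < m ∧
      3 * m ^ 2 ≤ 4 * (B * C - F ^ 2) := by
  intro k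
  induction k using Nat.strong_induction_on with
  | _ k ih =>
  intro B F C hk hB hdet
  by_cases hF : 2 * F.natAbs ≤ B.natAbs
  · have hFabs : 2 * |F| ≤ B := by
      rw [Int.abs_eq_natAbs, ← Int.natAbs_of_nonneg hB.le]
      exact_mod_cast hF
    by_cases hBC : B ≤ C
    · -- terminal : take (1,0), value B
      refine ⟨1, 0, B, by ring, hB, ?_⟩
      have h4 : B * B ≤ B * C := mul_le_mul_of_nonneg_left hBC hB.le
      nlinarith [abs_nonneg F, sq_abs F]
    · -- swap
      push_neg at hBC
      have hC : 0 < C := by nlinarith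
      have hclt : C.natAbs + F.natAbs < k := by
        have : C.natAbs < B.natAbs := Int.natAbs_lt_natAbs_of_nonneg_of_lt hC.le hBC
        omega
      obtain ⟨y, z, m, h, hm, hle⟩ := ih (C.natAbs + F.natAbs) hclt C F B le_rfl hC
        (by nlinarith)
      exact ⟨z, y, m, by linear_combination h, hm, by nlinarith⟩
  · push_neg at hF
    have h1 : B * (F / B) + F % B = F := Int.mul_ediv_add_emod F B
    have h2 : 0 ≤ F % B := Int.emod_nonneg F (ne_of_gt hB)
    have h3 : F % B < B := Int.emod_lt_of_pos F hB
    have hFB : B < 2 * |F| := by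
      rw [Int.abs_eq_natAbs, ← Int.natAbs_of_nonneg hB.le]
      exact_mod_cast hF
    rcases le_or_gt (2 * (F % B)) B with hc | hc
    · set t : ℤ := -(F / B) with ht
      have hF' : F + t * B = F % B := by rw [ht]; linarith [h1]
      have habs : |F % B| < |F| := by rw [abs_of_nonneg h2]; omega
      have hlt : B.natAbs + (F % B).natAbs < k := by
        have : (F % B).natAbs < F.natAbs := by
          have := Int.natAbs_lt_natAbs_of_nonneg_of_lt (abs_nonneg (F % B)) habs
          simpa [Int.natAbs_abs] using this
        omega
      obtain ⟨y, z, m, h, hm, hle⟩ := ih _ hlt B (F % B) (B * t ^ 2 + 2 * F * t + C) le_rfl hB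
        (by nlinarith [sq_nonneg (F + t*B - F % B), sq_nonneg (F + t*B + F % B),
              (by linear_combination (F + t*B + F % B) * hF' :
                (F + t*B)^2 - (F % B)^2 = 0)])
      refine ⟨y + t * z, z, m, ?_, hm, ?_⟩
      · linear_combination h + (2*y*z) * hF'
      · nlinarith [(by linear_combination (F + t*B + F % B) * hF' :
          (F + t*B)^2 - (F % B)^2 = 0)]
    · set t : ℤ := -(F / B) - 1 with ht
      have hF' : F + t * B = F % B - B := by rw [ht]; linarith [h1]
      have habs : |F % B - B| < |F| := by rw [abs_of_nonpos (by omega)]; omega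
      have hlt : B.natAbs + (F % B - B).natAbs < k := by
        have : (F % B - B).natAbs < F.natAbs := by
          have := Int.natAbs_lt_natAbs_of_nonneg_of_lt (abs_nonneg (F % B - B)) habs
          simpa [Int.natAbs_abs] using this
        omega
      obtain ⟨y, z, m, h, hm, hle⟩ := ih _ hlt B (F % B - B) (B * t ^ 2 + 2 * F * t + C) le_rfl hB
        (by nlinarith [(by linear_combination (F + t*B + (F % B - B)) * hF' :
          (F + t*B)^2 - (F % B - B)^2 = 0)])
      refine ⟨y + t * z, z, m, ?_, hm, ?_⟩
      · linear_combination h + (2*y*z) * hF'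
      · nlinarith [(by linear_combination (F + t*B + (F % B - B)) * hF' :
          (F + t*B)^2 - (F % B - B)^2 = 0)]

/--完成 primitive vector to a unimodular matrix (as first column) -/
lemma prim_complete (x y z : ℤ) (h : Int.gcd x (Int.gcd y z) = 1) :
    ∃ v1 v2 v3 w1 w2 w3 : ℤ,
      x * (v2 * w3 - v3 * w2) - v1 * (y * w3 - z * w2) + w1 * (y * v3 - z * v2) = 1 := by
  by_cases hyz : y = 0 ∧ z = 0
  · obtain ⟨rfl, rfl⟩ := hyz
    simp [Int.gcd] at h
    rcases Int.natAbs_eq_iff.mp h with rfl | rfl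
    · exact ⟨0, 1, 0, 0, 0, 1, by ring⟩
    · exact ⟨0, 1, 0, 0, 0, -1, by ring⟩
  · set g : ℕ := Int.gcd y z with hg
    have hg0 : g ≠ 0 := by
      simp only [hg, Ne, Int.gcd_eq_zero_iff]
      tauto
    have hbez : (g : ℤ) = y * Int.gcdA y z + z * Int.gcdB y z := Int.gcd_eq_gcd_ab y z
    obtain ⟨y', hy'⟩ : (g : ℤ) ∣ y := Int.gcd_dvd_left _ _
    obtain ⟨z', hz'⟩ : (g : ℤ) ∣ z := Int.gcd_dvd_right _ _
    have hbez2 : (1 : ℤ) = x * Int.gcdA x g + g * Int.gcdB x g := by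
      have := Int.gcd_eq_gcd_ab x (g : ℤ)
      rw [h] at this
      exact_mod_cast this
    set p := Int.gcdA y z
    set q := Int.gcdB y z
    set u := Int.gcdA x g
    set w0 := Int.gcdB x g
    have hinner : y' * p + z' * q = 1 := by
      have hgz : (g : ℤ) ≠ 0 := by exact_mod_cast hg0
      have : (g : ℤ) * (y' * p + z' * q) = (g : ℤ) * 1 := by
        rw [mul_one]; rw [hy', hz'] at hbez; linarith [hbez]
      exact mul_left_cancel₀ hgz this
    exact ⟨-w0, u * y', u * z', 0, -q, p, by
      linear_combination x * u * hinner - w0 * hbez - hbez2⟩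

/-- positive definiteness: the form is positive at nonzero integer points -/
lemma posQ (a b c d e f : ℤ) (ha : 0 < a) (hB : 0 < a * b - d ^ 2)
    (hΔ : a * b * c + 2 * d * e * f - a * f ^ 2 - c * d ^ 2 - b * e ^ 2 = 1) :
    ∀ X Y Z : ℤ, ¬(X = 0 ∧ Y = 0 ∧ Z = 0) →
      0 < a * X ^ 2 + b * Y ^ 2 + c * Z ^ 2 + 2 * d * X * Y + 2 * e * X * Z + 2 * f * Y * Z := by
  intro X Y Z hne
  have key : (a * b - d ^ 2) * (a * (a * X ^ 2 + b * Y ^ 2 + c * Z ^ 2 + 2 * d * X * Y +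
      2 * e * X * Z + 2 * f * Y * Z)) =
      (a * b - d ^ 2) * (a * X + d * Y + e * Z) ^ 2 +
      ((a * b - d ^ 2) * Y + (a * f - d * e) * Z) ^ 2 +
      a * (a * b * c + 2 * d * e * f - a * f ^ 2 - c * d ^ 2 - b * e ^ 2) * Z ^ 2 := by ring
  rw [hΔ] at key
  have hpos : 0 < (a * b - d ^ 2) * (a * (a * X ^ 2 + b * Y ^ 2 + c * Z ^ 2 + 2 * d * X * Y +
      2 * e * X * Z + 2 * f * Y * Z)) := by
    rcases eq_or_ne Z 0 with rfl | hZ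
    · rcases eq_or_ne Y 0 with rfl | hY
      · have hX : X ≠ 0 := by tauto
        have h1 : 0 < (a * X + d * 0 + e * 0) ^ 2 := by
          apply sq_pos_of_ne_zero
          simpa using mul_ne_zero (ne_of_gt ha) hX
        nlinarith [key, mul_pos hB h1]
      · have h1 : 0 < ((a * b - d ^ 2) * Y + (a * f - d * e) * 0) ^ 2 := by
          apply sq_pos_of_ne_zero
          simpa using mul_ne_zero (ne_of_gt hB) hY
        nlinarith [key, h1, mul_nonneg hB.le (sq_nonneg (a * X + d * Y + e * 0))]
    · have h1 : 0 < a * 1 * Z ^ 2 := by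
        have : 0 < Z ^ 2 := sq_pos_of_ne_zero hZ
        nlinarith
      nlinarith [key, h1, mul_nonneg hB.le (sq_nonneg (a * X + d * Y + e * Z)),
        sq_nonneg ((a * b - d ^ 2) * Y + (a * f - d * e) * Z)]
  by_contra hle
  push_neg at hle
  have h2 : a * (a * X ^ 2 + b * Y ^ 2 + c * Z ^ 2 + 2 * d * X * Y +
      2 * e * X * Z + 2 * f * Y * Z) ≤ 0 := mul_nonpos_of_nonneg_of_nonpos ha.le hle
  nlinarith [mul_nonpos_of_nonneg_of_nonpos hB.le h2]

/-- every positive definite integral ternary quadratic form of determinant 1 is a sum of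
squares of three integral linear forms -/
lemma tern_main : ∀ (k : ℕ) (a b c d e f : ℤ), a.natAbs ≤ k → 0 < a → 0 < a * b - d ^ 2 →
    a * b * c + 2 * d * e * f - a * f ^ 2 - c * d ^ 2 - b * e ^ 2 = 1 →
    ∃ p1 q1 r1 p2 q2 r2 p3 q3 r3 : ℤ, ∀ x y z : ℤ,
      a * x ^ 2 + b * y ^ 2 + c * z ^ 2 + 2 * d * x * y + 2 * e * x * z + 2 * f * y * z =
        (p1 * x + q1 * y + r1 * z) ^ 2 + (p2 * x + q2 * y + r2 * z) ^ 2 +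
          (p3 * x + q3 * y + r3 * z) ^ 2 := by
  intro k
  induction k using Nat.strong_induction_on with
  | _ k ih =>
  intro a b c d e f hk ha hB hΔ
  by_cases ha1 : a = 1
  · subst ha1
    obtain ⟨p, q, r, s, h⟩ := bin_sum_sq ((b - d ^ 2).natAbs + (f - d * e).natAbs)
      (b - d ^ 2) (f - d * e) (c - e ^ 2) le_rfl (by nlinarith [hB]) (by linear_combination hΔ)
    exact ⟨1, d, e, 0, p, q, 0, r, s, fun x y z => by linear_combination h y z⟩
  · have ha2 : 2 ≤ a := by omega
    have hdetg : (a * b - d ^ 2) * (a * c - e ^ 2) - (a * f - d * e) ^ 2 = a := by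
      linear_combination a * hΔ
    obtain ⟨y0, z0, m, hgval, hm, hmle⟩ := bin_min
      ((a * b - d ^ 2).natAbs + (a * f - d * e).natAbs)
      (a * b - d ^ 2) (a * f - d * e) (a * c - e ^ 2) le_rfl hB (by rw [hdetg]; exact ha)
    rw [hdetg] at hmle
    obtain ⟨x0, r0, hxr, hr⟩ := round_half a (d * y0 + e * z0) ha
    have haV : a * (a * x0 ^ 2 + b * y0 ^ 2 + c * z0 ^ 2 + 2 * d * x0 * y0 + 2 * e * x0 * z0 +
        2 * f * y0 * z0) = r0 ^ 2 + m := by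
      linear_combination (a * x0 + d * y0 + e * z0 + r0) * hxr + hgval
    set V := a * x0 ^ 2 + b * y0 ^ 2 + c * z0 ^ 2 + 2 * d * x0 * y0 + 2 * e * x0 * z0 +
        2 * f * y0 * z0 with hV
    clear_value V
    have hVpos : 0 < V := by nlinarith [sq_nonneg r0]
    have hVlt : V < a := by
      have hmm : m ≤ m ^ 2 := by nlinarith
      have h9 : a * V < a * a := by nlinarith
      exact lt_of_mul_lt_mul_left h9 ha.le
    have hw0 : ¬(x0 = 0 ∧ y0 = 0 ∧ z0 = 0) := by
      rintro ⟨rfl, rfl, rfl⟩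
      rw [hV] at hVpos; simp at hVpos
    set G : ℕ := Int.gcd x0 (Int.gcd y0 z0) with hG
    clear_value G
    have hGpos : 0 < G := by
      rcases Nat.eq_zero_or_pos G with h0 | h0
      · exfalso
        rw [hG] at h0
        have h1 := Int.gcd_eq_zero_iff.mp h0
        have h2 := Int.gcd_eq_zero_iff.mp (by exact_mod_cast h1.2)
        exact hw0 ⟨h1.1, h2.1, h2.2⟩
      · exact h0
    obtain ⟨x1, hx1⟩ : ((G : ℕ) : ℤ) ∣ x0 := by rw [hG]; exact Int.gcd_dvd_left _ _
    obtain ⟨y1, hy1⟩ : ((G : ℕ) : ℤ) ∣ y0 := by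
      rw [hG]; exact dvd_trans (Int.gcd_dvd_right _ _) (Int.gcd_dvd_left _ _)
    obtain ⟨z1, hz1⟩ : ((G : ℕ) : ℤ) ∣ z0 := by
      rw [hG]; exact dvd_trans (Int.gcd_dvd_right _ _) (Int.gcd_dvd_right _ _)
    have hprim : Int.gcd x1 (Int.gcd y1 z1) = 1 := by
      have h1 : Int.gcd y0 z0 = G * Int.gcd y1 z1 := by
        rw [hy1, hz1, Int.gcd_mul_left]
        simp
      have h2 : G = G * Int.gcd x1 (Int.gcd y1 z1) := by
        conv_lhs => rw [hG, hx1, h1]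
        push_cast
        rw [Int.gcd_mul_left]
        simp
      apply Nat.eq_of_mul_eq_mul_left hGpos
      rw [Nat.mul_one]
      exact h2.symm
    have hG1 : (1 : ℤ) ≤ (G : ℤ) := by exact_mod_cast hGpos
    have hVG : V = (G : ℤ) ^ 2 * (a * x1 ^ 2 + b * y1 ^ 2 + c * z1 ^ 2 + 2 * d * x1 * y1 +
        2 * e * x1 * z1 + 2 * f * y1 * z1) := by
      rw [hV, hx1, hy1, hz1]; ring
    set a' := a * x1 ^ 2 + b * y1 ^ 2 + c * z1 ^ 2 + 2 * d * x1 * y1 + 2 * e * x1 * z1 +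
        2 * f * y1 * z1 with ha'
    clear_value a'
    have hGsq : (1 : ℤ) ≤ (G : ℤ) ^ 2 := by
      have h := mul_le_mul hG1 hG1 zero_le_one (by linarith)
      rw [sq]; simpa using h
    have ha'pos : 0 < a' := by
      by_contra hle
      push_neg at hle
      have h0 : 0 < (G : ℤ) ^ 2 * a' := hVG ▸ hVpos
      nlinarith [mul_nonpos_of_nonneg_of_nonpos (sq_nonneg ((G : ℤ))) hle]
    have ha'lt : a' < a := by
      have h1 : a' ≤ (G : ℤ) ^ 2 * a' := le_mul_of_one_le_left ha'pos.le hGsq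
      have h2 : (G : ℤ) ^ 2 * a' < a := hVG ▸ hVlt
      linarith
    obtain ⟨v1, v2, v3, w1, w2, w3, hdet1⟩ := prim_complete x1 y1 z1 hprim
    set b' := a * v1 ^ 2 + b * v2 ^ 2 + c * v3 ^ 2 + 2 * d * v1 * v2 + 2 * e * v1 * v3 +
        2 * f * v2 * v3 with hb'
    clear_value b'
    set c' := a * w1 ^ 2 + b * w2 ^ 2 + c * w3 ^ 2 + 2 * d * w1 * w2 + 2 * e * w1 * w3 +
        2 * f * w2 * w3 with hc'
    clear_value c'
    set d' := a * x1 * v1 + b * y1 * v2 + c * z1 * v3 + d * (x1 * v2 + v1 * y1) +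
        e * (x1 * v3 + v1 * z1) + f * (y1 * v3 + v2 * z1) with hd'
    clear_value d'
    set e' := a * x1 * w1 + b * y1 * w2 + c * z1 * w3 + d * (x1 * w2 + w1 * y1) +
        e * (x1 * w3 + w1 * z1) + f * (y1 * w3 + w2 * z1) with he'
    clear_value e'
    set f' := a * v1 * w1 + b * v2 * w2 + c * v3 * w3 + d * (v1 * w2 + w1 * v2) +
        e * (v1 * w3 + w1 * v3) + f * (v2 * w3 + w2 * v3) with hf'
    clear_value f'
    -- transformation identity
    have hI1 : ∀ W1 W2 W3 : ℤ,
        a' * W1 ^ 2 + b' * W2 ^ 2 + c' * W3 ^ 2 + 2 * d' * W1 * W2 + 2 * e' * W1 * W3 +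
          2 * f' * W2 * W3 =
        a * (x1 * W1 + v1 * W2 + w1 * W3) ^ 2 + b * (y1 * W1 + v2 * W2 + w2 * W3) ^ 2 +
          c * (z1 * W1 + v3 * W2 + w3 * W3) ^ 2 +
          2 * d * (x1 * W1 + v1 * W2 + w1 * W3) * (y1 * W1 + v2 * W2 + w2 * W3) +
          2 * e * (x1 * W1 + v1 * W2 + w1 * W3) * (z1 * W1 + v3 * W2 + w3 * W3) +
          2 * f * (y1 * W1 + v2 * W2 + w2 * W3) * (z1 * W1 + v3 * W2 + w3 * W3) := by
      intro W1 W2 W3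
      rw [ha', hb', hc', hd', he', hf']; ring
    -- determinant of the new form
    have hΔ' : a' * b' * c' + 2 * d' * e' * f' - a' * f' ^ 2 - c' * d' ^ 2 - b' * e' ^ 2 = 1 := by
      have key : a' * b' * c' + 2 * d' * e' * f' - a' * f' ^ 2 - c' * d' ^ 2 - b' * e' ^ 2 =
          (a * b * c + 2 * d * e * f - a * f ^ 2 - c * d ^ 2 - b * e ^ 2) *
          (x1 * (v2 * w3 - v3 * w2) - v1 * (y1 * w3 - z1 * w2) + w1 * (y1 * v3 - z1 * v2)) ^ 2 := by
        rw [ha', hb', hc', hd', he', hf']; ring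
      rw [key, hΔ, hdet1]; ring
    -- second minor positive
    have hQUpos : 0 < a * (x1 * (-d') + v1 * a' + w1 * 0) ^ 2 +
        b * (y1 * (-d') + v2 * a' + w2 * 0) ^ 2 + c * (z1 * (-d') + v3 * a' + w3 * 0) ^ 2 +
        2 * d * (x1 * (-d') + v1 * a' + w1 * 0) * (y1 * (-d') + v2 * a' + w2 * 0) +
        2 * e * (x1 * (-d') + v1 * a' + w1 * 0) * (z1 * (-d') + v3 * a' + w3 * 0) +
        2 * f * (y1 * (-d') + v2 * a' + w2 * 0) * (z1 * (-d') + v3 * a' + w3 * 0) := by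
      apply posQ a b c d e f ha hB hΔ
      rintro ⟨hX, hY, hZ⟩
      have hrec : a' * (x1 * (v2 * w3 - v3 * w2) - v1 * (y1 * w3 - z1 * w2) +
          w1 * (y1 * v3 - z1 * v2)) =
          (-(y1 * w3 - w2 * z1)) * (x1 * (-d') + v1 * a' + w1 * 0) +
          (x1 * w3 - w1 * z1) * (y1 * (-d') + v2 * a' + w2 * 0) +
          (-(x1 * w2 - w1 * y1)) * (z1 * (-d') + v3 * a' + w3 * 0) := by ring
      rw [hdet1, hX, hY, hZ] at hrec
      simp at hrec
      omega
    have hB'pos : 0 < a' * b' - d' ^ 2 := by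
      have h1 := hI1 (-d') a' 0
      have h2 : a' * (a' * (-d') ^ 2 + b' * a' ^ 2 + c' * 0 ^ 2 + 2 * d' * (-d') * a' +
          2 * e' * (-d') * 0 + 2 * f' * a' * 0) = (a' * b' - d' ^ 2) * a' ^ 2 := by ring
      rw [h1] at h2
      have h3 : 0 < (a' * b' - d' ^ 2) * a' ^ 2 := by
        rw [← h2]; exact mul_pos ha'pos hQUpos
      by_contra hle
      push_neg at hle
      have h4 := mul_nonpos_of_nonpos_of_nonneg hle (sq_nonneg a')
      linarith
    -- induction
    have hklt : a'.natAbs < k := by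
      have h1 : a'.natAbs < a.natAbs := Int.natAbs_lt_natAbs_of_nonneg_of_lt ha'pos.le ha'lt
      omega
    obtain ⟨p1, q1, r1, p2, q2, r2, p3, q3, r3, hP⟩ :=
      ih a'.natAbs hklt a' b' c' d' e' f' le_rfl ha'pos hB'pos hΔ'
    -- compose with the adjugate
    refine ⟨p1 * (v2 * w3 - v3 * w2) + q1 * (-(y1 * w3 - w2 * z1)) + r1 * (y1 * v3 - v2 * z1),
            p1 * (-(v1 * w3 - w1 * v3)) + q1 * (x1 * w3 - w1 * z1) + r1 * (-(x1 * v3 - v1 * z1)),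
            p1 * (v1 * w2 - w1 * v2) + q1 * (-(x1 * w2 - w1 * y1)) + r1 * (x1 * v2 - v1 * y1),
            p2 * (v2 * w3 - v3 * w2) + q2 * (-(y1 * w3 - w2 * z1)) + r2 * (y1 * v3 - v2 * z1),
            p2 * (-(v1 * w3 - w1 * v3)) + q2 * (x1 * w3 - w1 * z1) + r2 * (-(x1 * v3 - v1 * z1)),
            p2 * (v1 * w2 - w1 * v2) + q2 * (-(x1 * w2 - w1 * y1)) + r2 * (x1 * v2 - v1 * y1),
            p3 * (v2 * w3 - v3 * w2) + q3 * (-(y1 * w3 - w2 * z1)) + r3 * (y1 * v3 - v2 * z1),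
            p3 * (-(v1 * w3 - w1 * v3)) + q3 * (x1 * w3 - w1 * z1) + r3 * (-(x1 * v3 - v1 * z1)),
            p3 * (v1 * w2 - w1 * v2) + q3 * (-(x1 * w2 - w1 * y1)) + r3 * (x1 * v2 - v1 * y1),
            fun x y z => ?_⟩
    set X' := (v2 * w3 - v3 * w2) * x + (-(v1 * w3 - w1 * v3)) * y + (v1 * w2 - w1 * v2) * z
      with hX'
    clear_value X'
    set Y' := (-(y1 * w3 - w2 * z1)) * x + (x1 * w3 - w1 * z1) * y + (-(x1 * w2 - w1 * y1)) * z
      with hY'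
    clear_value Y'
    set Z' := (y1 * v3 - v2 * z1) * x + (-(x1 * v3 - v1 * z1)) * y + (x1 * v2 - v1 * y1) * z
      with hZ'
    clear_value Z'
    have hU1 : x1 * X' + v1 * Y' + w1 * Z' =
        (x1 * (v2 * w3 - v3 * w2) - v1 * (y1 * w3 - z1 * w2) + w1 * (y1 * v3 - z1 * v2)) * x := by
      rw [hX', hY', hZ']; ring
    have hU2 : y1 * X' + v2 * Y' + w2 * Z' =
        (x1 * (v2 * w3 - v3 * w2) - v1 * (y1 * w3 - z1 * w2) + w1 * (y1 * v3 - z1 * v2)) * y := by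
      rw [hX', hY', hZ']; ring
    have hU3 : z1 * X' + v3 * Y' + w3 * Z' =
        (x1 * (v2 * w3 - v3 * w2) - v1 * (y1 * w3 - z1 * w2) + w1 * (y1 * v3 - z1 * v2)) * z := by
      rw [hX', hY', hZ']; ring
    rw [hdet1, one_mul] at hU1 hU2 hU3
    have h2 := hI1 X' Y' Z'
    rw [hU1, hU2, hU3] at h2
    rw [← h2]
    have h3 := hP X' Y' Z'
    rw [h3, hX', hY', hZ']
    ring

/-- common construction: given a suitable prime, N is a sum of three squares -/
lemma build_rep (N p : ℕ) (hN : 0 < N) (hp : p.Prime) (hlt : 4 * N < p)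
    (hdvd : N ∣ p + 1) (hsq : IsSquare ((-(N : ℤ) : ℤ) : ZMod p)) :
    ∃ x y z : ℤ, (N : ℤ) = x ^ 2 + y ^ 2 + z ^ 2 := by
  haveI : Fact p.Prime := ⟨hp⟩
  obtain ⟨h0, hh0⟩ := hsq
  have hNq : ((N : ℕ) : ZMod p) ≠ 0 := by
    rw [Ne, ZMod.natCast_eq_zero_iff]
    intro hdvd2
    have := Nat.le_of_dvd hN hdvd2
    omega
  have hh0' : -((N : ℕ) : ZMod p) = h0 * h0 := by
    rw [← hh0]; push_cast; ring
  set β : ZMod p := h0 * ((N : ℕ) : ZMod p)⁻¹ with hβ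
  have hβsq : ((N : ℕ) : ZMod p) * β ^ 2 + 1 = 0 := by
    rw [hβ]
    have hNinv : ((N : ℕ) : ZMod p) * ((N : ℕ) : ZMod p)⁻¹ = 1 :=
      ZMod.mul_inv_of_unit _ (Ne.isUnit hNq)
    linear_combination (h0 * h0 * (((N:ℕ) : ZMod p))⁻¹ - 1) * hNinv -
      (((N:ℕ) : ZMod p))⁻¹ * hh0'
  set bb : ℤ := (β.val : ℤ) with hbb
  have hcast : ((((N : ℤ)) * bb ^ 2 + 1 : ℤ) : ZMod p) = 0 := by
    push_cast
    rw [hbb]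
    push_cast
    rw [ZMod.natCast_val, ZMod.cast_id]
    exact_mod_cast hβsq
  have hqdvd : ((p : ℤ)) ∣ ((N : ℤ)) * bb ^ 2 + 1 := by
    rwa [ZMod.intCast_zmod_eq_zero_iff_dvd] at hcast
  obtain ⟨A, hA⟩ := hqdvd
  obtain ⟨Cn, hCn⟩ := hdvd
  have hC : (N : ℤ) * (Cn : ℤ) = (p : ℤ) + 1 := by exact_mod_cast hCn.symm
  have hppos : (0 : ℤ) < (p : ℤ) := by exact_mod_cast hp.pos
  have hApos : 0 < A := by nlinarith [sq_nonneg bb, show (0:ℤ) < (N:ℤ) from by exact_mod_cast hN]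
  have hΔ : (N : ℤ) * A * (Cn : ℤ) + 2 * 0 * 1 * bb - (N : ℤ) * bb ^ 2 - (Cn : ℤ) * 0 ^ 2 -
      A * 1 ^ 2 = 1 := by
    linear_combination A * hC - hA
  obtain ⟨p1, q1, r1, p2, q2, r2, p3, q3, r3, hP⟩ :=
    tern_main (N : ℤ).natAbs (N : ℤ) A (Cn : ℤ) 0 1 bb le_rfl
      (by exact_mod_cast hN)
      (by have : (0:ℤ) < (N:ℤ) * A := mul_pos (by exact_mod_cast hN) hApos; nlinarith)
      hΔ
  refine ⟨p1, p2, p3, ?_⟩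
  have h := hP 1 0 0
  linear_combination h

lemma three_squares (N : ℕ) (hN : 0 < N) (h : N % 4 = 1 ∨ N % 4 = 2) :
    ∃ x y z : ℤ, (N : ℤ) = x ^ 2 + y ^ 2 + z ^ 2 := by
  haveI : NeZero (4 * N) := ⟨by omega⟩
  have hNodd4 : N % 4 = 1 → ∃ x y z : ℤ, (N : ℤ) = x ^ 2 + y ^ 2 + z ^ 2 := by
    intro h1
    obtain ⟨s, rfl⟩ : ∃ s, N = 4 * s + 1 := ⟨N / 4, by omega⟩
    set N := 4 * s + 1 with hNdef
    -- residue r = 8s+1 ≡ -1 mod N, ≡ 1 mod 4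
    have hkey : (8 * s + 1) * (8 * s + 1) = 1 + 4 * N * (4 * s) := by rw [hNdef]; ring
    have hu : ((8 * s + 1 : ℕ) : ZMod (4 * N)) * ((8 * s + 1 : ℕ) : ZMod (4 * N)) = 1 := by
      rw [← Nat.cast_mul, hkey, Nat.cast_add, Nat.cast_mul, ZMod.natCast_self, Nat.cast_one]
      ring
    obtain ⟨p, hgt, hp, hmodp⟩ :=
      Nat.forall_exists_prime_gt_and_eq_mod (IsUnit.of_mul_eq_one _ hu) (4 * N)
    have hmod : p ≡ 8 * s + 1 [MOD 4 * N] := (ZMod.natCast_eq_natCast_iff _ _ _).mp hmodp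
    have h4 : p % 4 = (8 * s + 1) % 4 := hmod.of_dvd ⟨N, rfl⟩
    have hp4 : p % 4 = 1 := by omega
    have hpodd : Odd p := by rw [Nat.odd_iff]; omega
    have hmodN : p ≡ 8 * s + 1 [MOD N] := hmod.of_dvd ⟨4, by rw [hNdef]; ring⟩
    have hdvd : N ∣ p + 1 := by
      have h2 : p + 1 ≡ 8 * s + 2 [MOD N] := hmodN.add_right 1
      have h3 : 8 * s + 2 ≡ 0 [MOD N] := by
        have he : 8 * s + 2 = 2 * N := by rw [hNdef]; ring
        rw [he]
        exact (Nat.modEq_zero_iff_dvd).mpr (dvd_mul_left N 2)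
      exact (Nat.modEq_zero_iff_dvd).mp (h2.trans h3)
    haveI : Fact p.Prime := ⟨hp⟩
    -- Jacobi symbol computation
    have hNodd : Odd N := by rw [Nat.odd_iff]; omega
    have hJ : J((-(N : ℤ)) | p) = 1 := by
      have e1 : J((-(N : ℤ)) | p) = ZMod.χ₄ p * J(((N:ℕ) : ℤ) | p) := jacobiSym.neg _ hpodd
      have e2 : ZMod.χ₄ p = 1 := ZMod.χ₄_nat_one_mod_four hp4
      have e3 : J(((N:ℕ) : ℤ) | p) = J(((p:ℕ) : ℤ) | N) :=
        jacobiSym.quadratic_reciprocity_one_mod_four h1 hpodd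
      have e4 : J(((p:ℕ) : ℤ) | N) = J(-1 | N) := by
        apply jacobiSym.mod_left'
        have hIdvd : ((N:ℕ) : ℤ) ∣ (p : ℤ) + 1 := by
          exact_mod_cast Int.natCast_dvd_natCast.mpr hdvd
        obtain ⟨cc, hcc⟩ := hIdvd
        exact (Int.modEq_iff_dvd.mpr ⟨-cc, by linarith⟩ : (p : ℤ) ≡ -1 [ZMOD (N : ℕ)])
      have e5 : J(-1 | N) = 1 := by
        rw [jacobiSym.at_neg_one hNodd]
        exact ZMod.χ₄_nat_one_mod_four h1
      rw [e1, e2, e3, e4, e5]; ring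
    exact build_rep N p hN hp hgt hdvd (ZMod.isSquare_of_jacobiSym_eq_one hJ)
  rcases h with h1 | h2
  · exact hNodd4 h1
  -- now N % 4 = 2
  rcases Nat.even_or_odd (N / 2) with hmeven | hmodd
  ·
    exfalso; rcases hmeven with ⟨t, ht⟩; omega
  rcases hmodd with ⟨t0, ht0⟩
  -- N = 2*(2*t0+1)
  rcases Nat.even_or_odd t0 with he | he
  · -- t0 = 2t : N = 8t+2, m = 4t+1
    obtain ⟨t, rfl⟩ := he
    obtain ⟨s, rfl⟩ : ∃ s, N = 8 * s + 2 := ⟨t, by omega⟩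
    clear h2 ht0
    set N := 8 * s + 2 with hNdef
    set m : ℕ := 4 * s + 1 with hmdef
    have hkey : (8 * s + 1) * (8 * s + 1) = 1 + 4 * N * (2 * s) := by rw [hNdef]; ring
    have hu : ((8 * s + 1 : ℕ) : ZMod (4 * N)) * ((8 * s + 1 : ℕ) : ZMod (4 * N)) = 1 := by
      rw [← Nat.cast_mul, hkey, Nat.cast_add, Nat.cast_mul, ZMod.natCast_self, Nat.cast_one]
      ring
    obtain ⟨p, hgt, hp, hmodp⟩ :=
      Nat.forall_exists_prime_gt_and_eq_mod (IsUnit.of_mul_eq_one _ hu) (4 * N)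
    have hmod : p ≡ 8 * s + 1 [MOD 4 * N] := (ZMod.natCast_eq_natCast_iff _ _ _).mp hmodp
    have h8 : p % 8 = (8 * s + 1) % 8 := hmod.of_dvd ⟨4 * s + 1, by rw [hNdef]; ring⟩
    have hp8 : p % 8 = 1 := by omega
    have hp4 : p % 4 = 1 := by omega
    have hpodd : Odd p := by rw [Nat.odd_iff]; omega
    have hmodN : p ≡ 8 * s + 1 [MOD N] := hmod.of_dvd ⟨4, by rw [hNdef]; ring⟩
    have hdvd : N ∣ p + 1 := by
      have hh2 : p + 1 ≡ 8 * s + 2 [MOD N] := hmodN.add_right 1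
      have hh3 : 8 * s + 2 ≡ 0 [MOD N] := by
        have he2 : 8 * s + 2 = 1 * N := by rw [hNdef]; ring
        rw [he2]
        exact (Nat.modEq_zero_iff_dvd).mpr (dvd_mul_left N 1)
      exact (Nat.modEq_zero_iff_dvd).mp (hh2.trans hh3)
    have hdvdm : m ∣ p + 1 := dvd_trans ⟨2, by rw [hmdef, hNdef]; ring⟩ hdvd
    haveI : Fact p.Prime := ⟨hp⟩
    have hmodd' : Odd m := by rw [Nat.odd_iff, hmdef]; omega
    have hm4 : m % 4 = 1 := by rw [hmdef]; omega
    have hJ : J((-(N : ℤ)) | p) = 1 := by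
      have e1 : J((-(N : ℤ)) | p) = ZMod.χ₄ p * J(((N:ℕ) : ℤ) | p) := jacobiSym.neg _ hpodd
      have e2 : ZMod.χ₄ p = 1 := ZMod.χ₄_nat_one_mod_four hp4
      have esplit : ((N : ℕ) : ℤ) = 2 * ((m : ℕ) : ℤ) := by rw [hNdef, hmdef]; push_cast; ring
      have e3 : J(((N:ℕ) : ℤ) | p) = J((2:ℤ) | p) * J(((m:ℕ) : ℤ) | p) := by
        rw [esplit, jacobiSym.mul_left]
      have e4 : J((2:ℤ) | p) = 1 := by
        rw [jacobiSym.at_two hpodd, ZMod.χ₈_nat_mod_eight, hp8]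
        decide
      have e5 : J(((m:ℕ) : ℤ) | p) = J(((p:ℕ) : ℤ) | m) :=
        jacobiSym.quadratic_reciprocity_one_mod_four hm4 hpodd
      have e6 : J(((p:ℕ) : ℤ) | m) = J(-1 | m) := by
        apply jacobiSym.mod_left'
        have hIdvd : ((m:ℕ) : ℤ) ∣ (p : ℤ) + 1 := by
          exact_mod_cast Int.natCast_dvd_natCast.mpr hdvdm
        obtain ⟨cc, hcc⟩ := hIdvd
        exact (Int.modEq_iff_dvd.mpr ⟨-cc, by linarith⟩ : (p : ℤ) ≡ -1 [ZMOD (m : ℕ)])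
      have e7 : J(-1 | m) = 1 := by
        rw [jacobiSym.at_neg_one hmodd']
        exact ZMod.χ₄_nat_one_mod_four hm4
      rw [e1, e2, e3, e4, e5, e6, e7]; ring
    exact build_rep N p hN hp hgt hdvd (ZMod.isSquare_of_jacobiSym_eq_one hJ)
  · -- t0 = 2t+1 : N = 8t+6, m = 4t+3
    obtain ⟨t, rfl⟩ := he
    obtain ⟨s, rfl⟩ : ∃ s, N = 8 * s + 6 := ⟨t, by omega⟩
    clear h2 ht0
    set N := 8 * s + 6 with hNdef
    set m : ℕ := 4 * s + 3 with hmdef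
    have hkey : (16 * s + 11) * (16 * s + 11) = 1 + 4 * N * (8 * s + 5) := by rw [hNdef]; ring
    have hu : ((16 * s + 11 : ℕ) : ZMod (4 * N)) * ((16 * s + 11 : ℕ) : ZMod (4 * N)) = 1 := by
      rw [← Nat.cast_mul, hkey, Nat.cast_add, Nat.cast_mul, ZMod.natCast_self, Nat.cast_one]
      ring
    obtain ⟨p, hgt, hp, hmodp⟩ :=
      Nat.forall_exists_prime_gt_and_eq_mod (IsUnit.of_mul_eq_one _ hu) (4 * N)
    have hmod : p ≡ 16 * s + 11 [MOD 4 * N] := (ZMod.natCast_eq_natCast_iff _ _ _).mp hmodp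
    have h8 : p % 8 = (16 * s + 11) % 8 := hmod.of_dvd ⟨4 * s + 3, by rw [hNdef]; ring⟩
    have hp8 : p % 8 = 3 := by omega
    have hp4 : p % 4 = 3 := by omega
    have hpodd : Odd p := by rw [Nat.odd_iff]; omega
    have hmodN : p ≡ 16 * s + 11 [MOD N] := hmod.of_dvd ⟨4, by rw [hNdef]; ring⟩
    have hdvd : N ∣ p + 1 := by
      have hh2 : p + 1 ≡ 16 * s + 12 [MOD N] := hmodN.add_right 1
      have hh3 : 16 * s + 12 ≡ 0 [MOD N] := by
        have he2 : 16 * s + 12 = 2 * N := by rw [hNdef]; ring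
        rw [he2]
        exact (Nat.modEq_zero_iff_dvd).mpr (dvd_mul_left N 2)
      exact (Nat.modEq_zero_iff_dvd).mp (hh2.trans hh3)
    have hdvdm : m ∣ p + 1 := dvd_trans ⟨2, by rw [hmdef, hNdef]; ring⟩ hdvd
    haveI : Fact p.Prime := ⟨hp⟩
    have hmodd' : Odd m := by rw [Nat.odd_iff, hmdef]; omega
    have hm4 : m % 4 = 3 := by rw [hmdef]; omega
    have hJ : J((-(N : ℤ)) | p) = 1 := by
      have e1 : J((-(N : ℤ)) | p) = ZMod.χ₄ p * J(((N:ℕ) : ℤ) | p) := jacobiSym.neg _ hpodd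
      have e2 : ZMod.χ₄ p = -1 := ZMod.χ₄_nat_three_mod_four hp4
      have esplit : ((N : ℕ) : ℤ) = 2 * ((m : ℕ) : ℤ) := by rw [hNdef, hmdef]; push_cast; ring
      have e3 : J(((N:ℕ) : ℤ) | p) = J((2:ℤ) | p) * J(((m:ℕ) : ℤ) | p) := by
        rw [esplit, jacobiSym.mul_left]
      have e4 : J((2:ℤ) | p) = -1 := by
        rw [jacobiSym.at_two hpodd, ZMod.χ₈_nat_mod_eight, hp8]
        decide
      have e5 : J(((m:ℕ) : ℤ) | p) = -J(((p:ℕ) : ℤ) | m) :=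
        jacobiSym.quadratic_reciprocity_three_mod_four hm4 hp4
      have e6 : J(((p:ℕ) : ℤ) | m) = J(-1 | m) := by
        apply jacobiSym.mod_left'
        have hIdvd : ((m:ℕ) : ℤ) ∣ (p : ℤ) + 1 := by
          exact_mod_cast Int.natCast_dvd_natCast.mpr hdvdm
        obtain ⟨cc, hcc⟩ := hIdvd
        exact (Int.modEq_iff_dvd.mpr ⟨-cc, by linarith⟩ : (p : ℤ) ≡ -1 [ZMOD (m : ℕ)])
      have e7 : J(-1 | m) = -1 := by
        rw [jacobiSym.at_neg_one hmodd']
        exact ZMod.χ₄_nat_three_mod_four hm4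
      rw [e1, e2, e3, e4, e5, e6, e7]; ring
    exact build_rep N p hN hp hgt hdvd (ZMod.isSquare_of_jacobiSym_eq_one hJ)

lemma sqm2 (t : ℤ) : t ^ 2 % 2 = t % 2 := by
  rcases Int.even_or_odd t with ⟨a, rfl⟩ | ⟨a, rfl⟩
  · have h1 : (a + a) ^ 2 = 2 * (2 * a ^ 2) := by ring
    have h2 : (2 * (2 * a ^ 2)) % 2 = 0 := Int.mul_emod_right 2 _
    rw [h1, h2]; omega
  · have h1 : (2 * a + 1) ^ 2 = 1 + 2 * (2 * a ^ 2 + 2 * a) := by ring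
    have h2 : (1 + 2 * (2 * a ^ 2 + 2 * a)) % 2 = 1 % 2 := Int.add_mul_emod_self_left ..
    rw [h1, h2]; omega

lemma sqm4 (t : ℤ) : t ^ 2 % 4 = t % 2 := by
  rcases Int.even_or_odd t with ⟨a, rfl⟩ | ⟨a, rfl⟩
  · have h1 : (a + a) ^ 2 = 4 * a ^ 2 := by ring
    have h2 : (4 * (a ^ 2)) % 4 = 0 := Int.mul_emod_right 4 _
    rw [h1, h2]; omega
  · have h1 : (2 * a + 1) ^ 2 = 1 + 4 * (a ^ 2 + a) := by ring
    have h2 : (1 + 4 * (a ^ 2 + a)) % 4 = 1 % 4 := Int.add_mul_emod_self_left ..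
    rw [h1, h2]; omega

lemma floor_odd_sq (z w : ℤ) (hw : z = 2 * w + 1) : ⌊(z ^ 2 : ℚ) / 2⌋ = 2 * w ^ 2 + 2 * w := by
  subst hw
  have e : ((2 * w + 1 : ℤ) : ℚ) ^ 2 / 2 = ((2 * w ^ 2 + 2 * w : ℤ) : ℚ) + 1 / 2 := by
    push_cast; ring
  rw [show ((2 * w + 1 : ℤ) ^ 2 : ℚ) = ((2 * w + 1 : ℤ) : ℚ) ^ 2 by push_cast; ring] at *
  rw [e, Int.floor_intCast_add]
  norm_num

lemma floor_even_sq (z w : ℤ) (hw : z = 2 * w) : ⌊(z ^ 2 : ℚ) / 2⌋ = 2 * w ^ 2 := by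
  subst hw
  have e : ((2 * w : ℤ) : ℚ) ^ 2 / 2 = ((2 * w ^ 2 : ℤ) : ℚ) := by push_cast; ring
  rw [show ((2 * w : ℤ) ^ 2 : ℚ) = ((2 * w : ℤ) : ℚ) ^ 2 by push_cast; ring] at *
  rw [e, Int.floor_intCast]

lemma assemble_even_n (n : ℕ) (x y z : ℤ) (hpar : x % 2 = y % 2) (hz : z % 2 = 1)
    (h : 2 * (n : ℤ) + 1 = x ^ 2 + y ^ 2 + z ^ 2) :
    ∃ X Y Z : ℤ, (n : ℤ) = X ^ 2 + Y ^ 2 + ⌊(Z ^ 2 : ℚ) / 2⌋ := by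
  obtain ⟨u, hu⟩ : ∃ u, x + y = 2 * u := ⟨(x + y) / 2, by omega⟩
  have hy : y = 2 * u - x := by omega
  obtain ⟨w, hw⟩ : ∃ w, z = 2 * w + 1 := ⟨(z - 1) / 2, by omega⟩
  have h2 : 2 * (n : ℤ) = 2 * u ^ 2 + 2 * (x - u) ^ 2 + 2 * (2 * w ^ 2 + 2 * w) := by
    linear_combination h + (y + 2 * u - x) * hy + (z + 2 * w + 1) * hw
  have key : (n : ℤ) = u ^ 2 + (x - u) ^ 2 + (2 * w ^ 2 + 2 * w) := by linarith
  exact ⟨u, x - u, z, by rw [floor_odd_sq z w hw]; linarith⟩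

lemma assemble_odd_n (n : ℕ) (x y z : ℤ) (hpar : x % 2 = y % 2) (hz : z % 2 = 0)
    (h : 2 * (n : ℤ) = x ^ 2 + y ^ 2 + z ^ 2) :
    ∃ X Y Z : ℤ, (n : ℤ) = X ^ 2 + Y ^ 2 + ⌊(Z ^ 2 : ℚ) / 2⌋ := by
  obtain ⟨u, hu⟩ : ∃ u, x + y = 2 * u := ⟨(x + y) / 2, by omega⟩
  have hy : y = 2 * u - x := by omega
  obtain ⟨w, hw⟩ : ∃ w, z = 2 * w := ⟨z / 2, by omega⟩
  have h2 : 2 * (n : ℤ) = 2 * u ^ 2 + 2 * (x - u) ^ 2 + 2 * (2 * w ^ 2) := by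
    linear_combination h + (y + 2 * u - x) * hy + (z + 2 * w) * hw
  have key : (n : ℤ) = u ^ 2 + (x - u) ^ 2 + 2 * w ^ 2 := by linarith
  exact ⟨u, x - u, z, by rw [floor_even_sq z w hw]; linarith⟩

theorem stmt3 (n : ℕ) :
    ∃ x y z : ℤ, (n : ℤ) = x^2 + y^2 + ⌊(z^2 : ℚ)/2⌋ := by
  rcases Nat.even_or_odd n with hn | hn
  · -- n even : use N = 2n+1
    obtain ⟨x, y, z, hxyz⟩ := three_squares (2 * n + 1) (by omega)
      (Or.inl (show (2 * n + 1) % 4 = 1 by obtain ⟨k, rfl⟩ := hn; omega))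
    have h : 2 * (n : ℤ) + 1 = x ^ 2 + y ^ 2 + z ^ 2 := by push_cast at hxyz; linarith
    have p1 := sqm2 x
    have p2 := sqm2 y
    have p3 := sqm2 z
    obtain ⟨Sx, hSx⟩ : ∃ S : ℤ, x ^ 2 = S := ⟨_, rfl⟩
    obtain ⟨Sy, hSy⟩ : ∃ S : ℤ, y ^ 2 = S := ⟨_, rfl⟩
    obtain ⟨Sz, hSz⟩ : ∃ S : ℤ, z ^ 2 = S := ⟨_, rfl⟩
    rw [hSx] at p1
    rw [hSy] at p2
    rw [hSz] at p3
    rw [hSx, hSy, hSz] at h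
    have D : (x % 2 = y % 2 ∧ z % 2 = 1) ∨ (x % 2 = z % 2 ∧ y % 2 = 1) ∨
        (y % 2 = z % 2 ∧ x % 2 = 1) := by omega
    rw [← hSx, ← hSy, ← hSz] at h
    rcases D with ⟨hp, hzz⟩ | ⟨hp, hzz⟩ | ⟨hp, hzz⟩
    · exact assemble_even_n n x y z hp hzz h
    · exact assemble_even_n n x z y hp hzz (by linarith)
    · exact assemble_even_n n y z x hp hzz (by linarith)
  · -- n odd : use N = 2n
    obtain ⟨x, y, z, hxyz⟩ := three_squares (2 * n) (by rcases hn with ⟨k, rfl⟩; omega)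
      (Or.inr (show (2 * n) % 4 = 2 by obtain ⟨k, rfl⟩ := hn; omega))
    have h : 2 * (n : ℤ) = x ^ 2 + y ^ 2 + z ^ 2 := by push_cast at hxyz; linarith
    have hn4 : (2 * (n : ℤ)) % 4 = 2 := by
      obtain ⟨k, rfl⟩ := hn; push_cast; omega
    have p1 := sqm4 x
    have p2 := sqm4 y
    have p3 := sqm4 z
    obtain ⟨Sx, hSx⟩ : ∃ S : ℤ, x ^ 2 = S := ⟨_, rfl⟩
    obtain ⟨Sy, hSy⟩ : ∃ S : ℤ, y ^ 2 = S := ⟨_, rfl⟩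
    obtain ⟨Sz, hSz⟩ : ∃ S : ℤ, z ^ 2 = S := ⟨_, rfl⟩
    rw [hSx] at p1
    rw [hSy] at p2
    rw [hSz] at p3
    rw [hSx, hSy, hSz] at h
    have D : (x % 2 = y % 2 ∧ z % 2 = 0) ∨ (x % 2 = z % 2 ∧ y % 2 = 0) ∨
        (y % 2 = z % 2 ∧ x % 2 = 0) := by omega
    rw [← hSx, ← hSy, ← hSz] at h
    rcases D with ⟨hp, hzz⟩ | ⟨hp, hzz⟩ | ⟨hp, hzz⟩
    · exact assemble_odd_n n x y z hp hzz h
    · exact assemble_odd_n n x z y hp hzz (by linarith)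
    · exact assemble_odd_n n y z x hp hzz (by linarith)
end

section
/- Every natural number n can be written as x(x+1) + y(y+1)/3 + ⌈z(z+1)/3⌉ for some integers x, y, z with 3 dividing y(y+1). -/
open scoped NumberTheorySymbols

namespace S15
set_option maxHeartbeats 1000000

def Qb (A B C y z : ℤ) : ℤ := A*y^2 + 2*B*y*z + C*z^2

def RepB (A B C N : ℤ) : Prop := ∃ y z, ¬(y = 0 ∧ z = 0) ∧ Qb A B C y z = N

def PosB (A B C : ℤ) : Prop := ∀ y z, ¬(y = 0 ∧ z = 0) → 0 < Qb A B C y z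

lemma round_lemma (m r : ℤ) (hm : 0 < m) : ∃ x : ℤ, (2*(m*x + r))^2 ≤ m^2 := by
  have h1 : r % m + m * (r / m) = r := Int.emod_add_mul_ediv r m
  have h2 : 0 ≤ r % m := Int.emod_nonneg r (by omega)
  have h3 : r % m < m := Int.emod_lt_of_pos r hm
  by_cases hc : 2 * (r % m) ≤ m
  · refine ⟨-(r / m), ?_⟩
    have : m * (-(r / m)) + r = r % m := by linarith [h1]
    rw [this]; nlinarith
  · refine ⟨-(r / m) - 1, ?_⟩
    have : m * (-(r / m) - 1) + r = r % m - m := by linarith [h1]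
    rw [this]; nlinarith

lemma Qb_subst (A B C p q r s y z : ℤ) :
    Qb (Qb A B C p r) (A*p*q + B*(p*s + q*r) + C*r*s) (Qb A B C q s) y z
      = Qb A B C (p*y + q*z) (r*y + s*z) := by
  simp only [Qb]; ring

lemma Db_subst (A B C p q r s : ℤ) :
    Qb A B C p r * Qb A B C q s - (A*p*q + B*(p*s + q*r) + C*r*s)^2
      = (A*C - B^2) * (p*s - q*r)^2 := by
  simp only [Qb]; ring

lemma repB_subst (A B C p q r s : ℤ) (h : p*s - q*r = 1) (N : ℤ) :
    RepB (Qb A B C p r) (A*p*q + B*(p*s + q*r) + C*r*s) (Qb A B C q s) N ↔ RepB A B C N := by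
  constructor
  · rintro ⟨y, z, hnz, hv⟩
    refine ⟨p*y + q*z, r*y + s*z, ?_, by rw [← Qb_subst]; exact hv⟩
    rintro ⟨h1, h2⟩
    apply hnz
    constructor
    · have : y = s*(p*y+q*z) - q*(r*y+s*z) := by linear_combination (-y) * h
      rw [this, h1, h2]; ring
    · have : z = -r*(p*y+q*z) + p*(r*y+s*z) := by linear_combination (-z) * h
      rw [this, h1, h2]; ring
  · rintro ⟨Y, Z, hnz, hv⟩
    refine ⟨s*Y - q*Z, -r*Y + p*Z, ?_, ?_⟩
    · rintro ⟨h1, h2⟩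
      apply hnz
      constructor
      · have : Y = p*(s*Y - q*Z) + q*(-r*Y + p*Z) := by linear_combination (-Y) * h
        rw [this, h1, h2]; ring
      · have : Z = r*(s*Y - q*Z) + s*(-r*Y + p*Z) := by linear_combination (-Z) * h
        rw [this, h1, h2]; ring
    · rw [Qb_subst]
      have e1 : p*(s*Y - q*Z) + q*(-r*Y + p*Z) = Y := by linear_combination Y * h
      have e2 : r*(s*Y - q*Z) + s*(-r*Y + p*Z) = Z := by linear_combination Z * h
      rw [e1, e2]; exact hv

lemma posB_of_repB (A B C : ℤ) (h : ∀ N, RepB A B C N → 0 < N) : PosB A B C :=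
  fun y z hnz => h _ ⟨y, z, hnz, rfl⟩

lemma posB_subst (A B C p q r s : ℤ) (h : p*s - q*r = 1) (hpos : PosB A B C) :
    PosB (Qb A B C p r) (A*p*q + B*(p*s + q*r) + C*r*s) (Qb A B C q s) := by
  apply posB_of_repB
  intro N hN
  rw [repB_subst A B C p q r s h] at hN
  obtain ⟨y, z, hnz, hv⟩ := hN
  rw [← hv]; exact hpos y z hnz

theorem bred : ∀ μ : ℕ, ∀ A B C : ℤ, (A + C).toNat ≤ μ → PosB A B C → A*C - B^2 = 3 →
    ∀ N, RepB A B C N →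
    (∃ y z : ℤ, N = y^2 + 3*z^2) ∨ (∃ y z : ℤ, N = 2*y^2 + 2*y*z + 2*z^2) := by
  intro μ
  induction μ with
  | zero =>
    intro A B C hμ hpos hdet N hrep
    have hA : 0 < A := by have := hpos 1 0 (by simp); simpa [Qb] using this
    have hC : 0 < C := by have := hpos 0 1 (by simp); simpa [Qb] using this
    omega
  | succ n ih =>
    intro A B C hμ hpos hdet N hrep
    have hA : 0 < A := by have := hpos 1 0 (by simp); simpa [Qb] using this
    have hC : 0 < C := by have := hpos 0 1 (by simp); simpa [Qb] using this
    by_cases hA2B : A^2 < 4*B^2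
    · -- shear second variable: (p,q,r,s) = (1,k,0,1)
      obtain ⟨k, hk⟩ := round_lemma A B hA
      have hdet1 : (1:ℤ)*1 - k*0 = 1 := by ring
      have hC' : 0 < Qb A B C k 1 := hpos k 1 (by simp)
      have hdetnew : A * Qb A B C k 1 - (A*k + B)^2 = 3 := by
        have := Db_subst A B C 1 k 0 1
        simp only [Qb] at this ⊢
        have h2 : Qb A B C 1 0 = A := by simp [Qb]
        nlinarith [this]
      have hmeas : Qb A B C k 1 < C := by
        have hBB : (A*k+B)^2 < B^2 := by nlinarith
        nlinarith [hdetnew]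
      have hrep' : RepB A (A*k + B) (Qb A B C k 1) N := by
        have hiff := repB_subst A B C 1 k 0 1 (by ring) N
        have e1 : Qb A B C 1 0 = A := by simp [Qb]
        have e2 : A*1*k + B*(1*1 + k*0) + C*0*1 = A*k + B := by ring
        rw [e1, e2] at hiff
        exact hiff.mpr hrep
      have hpos' : PosB A (A*k + B) (Qb A B C k 1) := by
        have := posB_subst A B C 1 k 0 1 (by ring) hpos
        have e1 : Qb A B C 1 0 = A := by simp [Qb]
        have e2 : A*1*k + B*(1*1 + k*0) + C*0*1 = A*k + B := by ring
        rwa [e1, e2] at this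
      exact ih A (A*k + B) (Qb A B C k 1) (by omega) hpos' hdetnew N hrep'
    · by_cases hC2B : C^2 < 4*B^2
      · -- shear first variable: (p,q,r,s) = (1,0,k,1)
        obtain ⟨k, hk⟩ := round_lemma C B hC
        have hA' : 0 < Qb A B C 1 k := hpos 1 k (by simp)
        have hdetnew : Qb A B C 1 k * C - (B + C*k)^2 = 3 := by
          have := Db_subst A B C 1 0 k 1
          simp only [Qb] at this ⊢
          nlinarith [this]
        have hmeas : Qb A B C 1 k < A := by
          have hBB : (C*k+B)^2 < B^2 := by nlinarith
          nlinarith [hdetnew]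
        have hrep' : RepB (Qb A B C 1 k) (B + C*k) C N := by
          have hiff := repB_subst A B C 1 0 k 1 (by ring) N
          have e1 : Qb A B C 0 1 = C := by simp [Qb]
          have e2 : A*1*0 + B*(1*1 + 0*k) + C*k*1 = B + C*k := by ring
          rw [e1, e2] at hiff
          exact hiff.mpr hrep
        have hpos' : PosB (Qb A B C 1 k) (B + C*k) C := by
          have := posB_subst A B C 1 0 k 1 (by ring) hpos
          have e1 : Qb A B C 0 1 = C := by simp [Qb]
          have e2 : A*1*0 + B*(1*1 + 0*k) + C*k*1 = B + C*k := by ring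
          rwa [e1, e2] at this
        exact ih (Qb A B C 1 k) (B + C*k) C (by omega) hpos' hdetnew N hrep'
      · -- terminal
        push_neg at hA2B hC2B
        have hac4 : 4*B^2 ≤ A*C := by nlinarith
        have hAC : A*C ≤ 4 := by nlinarith
        have h1 : 3 ≤ A*C := by nlinarith [sq_nonneg B]
        obtain ⟨y, z, hnz, hv⟩ := hrep
        rcases eq_or_lt_of_le hAC with h4 | hlt
        · -- A*C = 4
          have h4 : A*C = 4 := h4
          have hB2 : B^2 = 1 := by linarith
          have hAne : A ≠ 1 := by intro h; rw [h] at hA2B; linarith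
          have hCne : C ≠ 1 := by intro h; rw [h] at hC2B; linarith
          have hAg : 2 ≤ A := by omega
          have hCg : 2 ≤ C := by omega
          have hA2 : A ≤ 2 := by nlinarith
          have hA2 : A = 2 := by omega
          subst hA2
          have hC2 : C = 2 := by omega
          subst hC2
          have : (B-1)*(B+1) = 0 := by linear_combination hB2
          rcases mul_eq_zero.mp this with hB | hB
          · have hB : B = 1 := by omega
            right; exact ⟨y, z, by rw [← hv]; simp only [Qb, hB]; ring⟩
          · have hB : B = -1 := by omega
            right; exact ⟨y, -z, by rw [← hv]; simp only [Qb, hB]; ring⟩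
        · -- A*C = 3
          have h3 : A*C = 3 := by
            have : A*C ≤ 3 := Int.lt_add_one_iff.mp hlt
            linarith
          have hB0 : B^2 = 0 := by linarith
          have hB : B = 0 := by
            have := sq_eq_zero_iff.mp hB0
            exact this
          have hA3 : A ≤ 3 := by nlinarith
          rcases (by omega : A = 1 ∨ A = 2 ∨ A = 3) with ha|ha|ha
          · have hc : C = 3 := by rw [ha] at h3; linarith
            left; exact ⟨y, z, by rw [← hv]; simp only [Qb, ha, hc, hB]; ring⟩
          · exfalso; rw [ha] at h3; omega
          · have hc : C = 1 := by rw [ha] at h3; linarith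
            left; exact ⟨z, y, by rw [← hv]; simp only [Qb, ha, hc, hB]; ring⟩



lemma exists_min_binary (A B C : ℤ) (hpos : PosB A B C) :
    ∃ μ : ℤ, 0 < μ ∧ RepB A B C μ ∧ ∀ K, RepB A B C K → μ ≤ K := by
  classical
  set SB : Set ℕ := {k : ℕ | RepB A B C (k : ℤ)} with hSB
  have hAne : 0 < A := by
    have := hpos 1 0 (by simp)
    simpa [Qb] using this
  have hne : SB.Nonempty := by
    refine ⟨A.toNat, ?_⟩
    simp only [hSB, Set.mem_setOf_eq]
    rw [Int.toNat_of_nonneg (by omega)]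
    exact ⟨1, 0, by simp, by simp [Qb]⟩
  have hmem := Nat.sInf_mem hne
  refine ⟨(sInf SB : ℕ), ?_, hmem, ?_⟩
  · obtain ⟨y, z, hnz, hval⟩ := hmem
    exact hval ▸ hpos y z hnz
  · intro K hK
    obtain ⟨y, z, hnz, hval⟩ := hK
    have hKpos : 0 < K := hval ▸ hpos y z hnz
    have hmem2 : K.toNat ∈ SB := by
      simp only [hSB, Set.mem_setOf_eq]
      rw [Int.toNat_of_nonneg (by omega)]
      exact ⟨y, z, hnz, hval⟩
    have := Nat.sInf_le hmem2
    omega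

/-- Binary Hermite inequality: for a positive binary form with minimum μ, 3μ² ≤ 4·det. -/
theorem bherm (A B C μ : ℤ) (hpos : PosB A B C)
    (hmin : ∀ K, RepB A B C K → μ ≤ K) (hrep : RepB A B C μ) :
    3*μ^2 ≤ 4*(A*C - B^2) := by
  obtain ⟨y₀, z₀, hnz, hv⟩ := hrep
  have hμpos : 0 < μ := hv ▸ hpos y₀ z₀ hnz
  -- primitivity
  have hgdvd1 : ((Int.gcd y₀ z₀ : ℤ)) ∣ y₀ := Int.gcd_dvd_left y₀ z₀
  have hgdvd2 : ((Int.gcd y₀ z₀ : ℤ)) ∣ z₀ := Int.gcd_dvd_right y₀ z₀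
  obtain ⟨y₁, hy₁⟩ := hgdvd1
  obtain ⟨z₁, hz₁⟩ := hgdvd2
  set g : ℤ := (Int.gcd y₀ z₀ : ℤ) with hg
  have hgpos : 0 < g := by
    have : Int.gcd y₀ z₀ ≠ 0 := by
      intro h
      rw [Int.gcd_eq_zero_iff] at h
      exact hnz ⟨h.1, h.2⟩
    positivity
  have hg1 : g = 1 := by
    by_contra hne
    have hg2 : 2 ≤ g := by omega
    have hK : Qb A B C y₁ z₁ = Qb A B C y₀ z₀ / (g^2) := by
      rw [hy₁, hz₁]
      have : Qb A B C (g*y₁) (g*z₁) = g^2 * Qb A B C y₁ z₁ := by simp only [Qb]; ring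
      rw [this, Int.mul_ediv_cancel_left _ (by positivity)]
    have hnz1 : ¬(y₁ = 0 ∧ z₁ = 0) := by
      rintro ⟨h1, h2⟩
      apply hnz
      constructor <;> simp [hy₁, hz₁, h1, h2]
    have hKrep : RepB A B C (Qb A B C y₁ z₁) := ⟨y₁, z₁, hnz1, rfl⟩
    have hKge : μ ≤ Qb A B C y₁ z₁ := hmin _ hKrep
    have hμeq : μ = g^2 * Qb A B C y₁ z₁ := by
      rw [← hv, hy₁, hz₁]; simp only [Qb]; ring
    have hKpos : 0 < Qb A B C y₁ z₁ := hpos _ _ hnz1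
    have hg4 : (4:ℤ) ≤ g^2 := by nlinarith
    have h4K : 4 * Qb A B C y₁ z₁ ≤ g^2 * Qb A B C y₁ z₁ :=
      mul_le_mul_of_nonneg_right hg4 (le_of_lt hKpos)
    linarith
  -- Bezout completion
  have hbez : y₀ * Int.gcdA y₀ z₀ + z₀ * Int.gcdB y₀ z₀ = 1 := by
    have := Int.gcd_eq_gcd_ab y₀ z₀
    rw [← hg, hg1] at this
    linarith
  set aa := Int.gcdA y₀ z₀ with haa
  set bb := Int.gcdB y₀ z₀ with hbb
  -- substitution (p,q,r,s) = (y₀, -bb, z₀, aa), det = y₀*aa + bb*z₀ = 1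
  have hdet1 : y₀ * aa - (-bb) * z₀ = 1 := by linarith
  set B' := A*y₀*(-bb) + B*(y₀*aa + (-bb)*z₀) + C*z₀*aa with hB'
  set C' := Qb A B C (-bb) aa with hC'
  have hiff := repB_subst A B C y₀ (-bb) z₀ aa hdet1
  have hposn : PosB μ B' C' := by
    have := posB_subst A B C y₀ (-bb) z₀ aa hdet1 hpos
    rwa [hv] at this
  have hminn : ∀ K, RepB μ B' C' K → μ ≤ K := by
    intro K hK
    apply hmin
    have := hiff K
    rw [hv] at this
    exact this.mp hK
  have hdetn : μ * C' - B'^2 = A*C - B^2 := by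
    have h := Db_subst A B C y₀ (-bb) z₀ aa
    have h2 : μ * C' - B'^2 = (A*C - B^2) * (y₀*aa - (-bb)*z₀)^2 := by
      rw [hC', hB', ← hv]; exact h
    rw [hdet1] at h2
    simpa using h2
  -- shear
  obtain ⟨k, hk⟩ := round_lemma μ B' hμpos
  set B'' := μ*k + B' with hB''
  set C'' := Qb μ B' C' k 1 with hC''
  have hC''ge : μ ≤ C'' := hminn _ ⟨k, 1, by simp, rfl⟩
  have hdet2 : μ * C'' - B''^2 = A*C - B^2 := by
    have h := Db_subst μ B' C' 1 k 0 1
    have e1 : Qb μ B' C' 1 0 = μ := by simp [Qb]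
    have e2 : μ*1*k + B'*(1*1 + k*0) + C'*0*1 = B'' := by rw [hB'']; ring
    rw [e1, e2, ← hC''] at h
    rw [hdetn] at h
    simpa using h
  nlinarith [hk, hC''ge, hμpos, hdet2]

/-! ### Ternary forms -/

def Qt (a b c d e f x y z : ℤ) : ℤ :=
  a*x^2 + b*y^2 + c*z^2 + 2*d*x*y + 2*e*x*z + 2*f*y*z

def Dt (a b c d e f : ℤ) : ℤ := a*b*c + 2*d*e*f - a*f^2 - b*e^2 - c*d^2

def bil3 (a b c d e f u1 u2 u3 v1 v2 v3 : ℤ) : ℤ :=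
  a*u1*v1 + b*u2*v2 + c*u3*v3 + d*(u1*v2+u2*v1) + e*(u1*v3+u3*v1) + f*(u2*v3+u3*v2)

def det3 (u1 u2 u3 v1 v2 v3 w1 w2 w3 : ℤ) : ℤ :=
  u1*(v2*w3 - v3*w2) - v1*(u2*w3 - u3*w2) + w1*(u2*v3 - u3*v2)

def RepT (a b c d e f N : ℤ) : Prop :=
  ∃ x y z, ¬(x = 0 ∧ y = 0 ∧ z = 0) ∧ Qt a b c d e f x y z = N

def PosT (a b c d e f : ℤ) : Prop :=
  ∀ x y z, ¬(x = 0 ∧ y = 0 ∧ z = 0) → 0 < Qt a b c d e f x y z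

lemma Qt_subst (a b c d e f u1 u2 u3 v1 v2 v3 w1 w2 w3 X Y Z : ℤ) :
    Qt (Qt a b c d e f u1 u2 u3) (Qt a b c d e f v1 v2 v3) (Qt a b c d e f w1 w2 w3)
       (bil3 a b c d e f u1 u2 u3 v1 v2 v3) (bil3 a b c d e f u1 u2 u3 w1 w2 w3)
       (bil3 a b c d e f v1 v2 v3 w1 w2 w3) X Y Z
      = Qt a b c d e f (u1*X + v1*Y + w1*Z) (u2*X + v2*Y + w2*Z) (u3*X + v3*Y + w3*Z) := by
  simp only [Qt, bil3]; ring

lemma Dt_subst (a b c d e f u1 u2 u3 v1 v2 v3 w1 w2 w3 : ℤ) :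
    Dt (Qt a b c d e f u1 u2 u3) (Qt a b c d e f v1 v2 v3) (Qt a b c d e f w1 w2 w3)
       (bil3 a b c d e f u1 u2 u3 v1 v2 v3) (bil3 a b c d e f u1 u2 u3 w1 w2 w3)
       (bil3 a b c d e f v1 v2 v3 w1 w2 w3)
      = Dt a b c d e f * (det3 u1 u2 u3 v1 v2 v3 w1 w2 w3)^2 := by
  simp only [Dt, Qt, bil3, det3]; ring

lemma repT_subst (a b c d e f u1 u2 u3 v1 v2 v3 w1 w2 w3 : ℤ)
    (h : det3 u1 u2 u3 v1 v2 v3 w1 w2 w3 = 1) (N : ℤ) :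
    RepT (Qt a b c d e f u1 u2 u3) (Qt a b c d e f v1 v2 v3) (Qt a b c d e f w1 w2 w3)
       (bil3 a b c d e f u1 u2 u3 v1 v2 v3) (bil3 a b c d e f u1 u2 u3 w1 w2 w3)
       (bil3 a b c d e f v1 v2 v3 w1 w2 w3) N ↔ RepT a b c d e f N := by
  simp only [det3] at h
  constructor
  · rintro ⟨x, y, z, hnz, hval⟩
    refine ⟨u1*x + v1*y + w1*z, u2*x + v2*y + w2*z, u3*x + v3*y + w3*z, ?_, ?_⟩
    · rintro ⟨h1, h2, h3⟩
      apply hnz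
      refine ⟨?_, ?_, ?_⟩
      · have : x = (v2*w3 - v3*w2)*(u1*x + v1*y + w1*z)
              - (v1*w3 - v3*w1)*(u2*x + v2*y + w2*z)
              + (v1*w2 - v2*w1)*(u3*x + v3*y + w3*z) := by linear_combination (-x) * h
        rw [this, h1, h2, h3]; ring
      · have : y = -((u2*w3 - u3*w2))*(u1*x + v1*y + w1*z)
              + (u1*w3 - u3*w1)*(u2*x + v2*y + w2*z)
              - (u1*w2 - u2*w1)*(u3*x + v3*y + w3*z) := by linear_combination (-y) * h
        rw [this, h1, h2, h3]; ring
      · have : z = (u2*v3 - u3*v2)*(u1*x + v1*y + w1*z)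
              - (u1*v3 - u3*v1)*(u2*x + v2*y + w2*z)
              + (u1*v2 - u2*v1)*(u3*x + v3*y + w3*z) := by linear_combination (-z) * h
        rw [this, h1, h2, h3]; ring
    · rw [← Qt_subst]; exact hval
  · rintro ⟨X, Y, Z, hnz, hval⟩
    refine ⟨(v2*w3 - v3*w2)*X - (v1*w3 - v3*w1)*Y + (v1*w2 - v2*w1)*Z,
            -(u2*w3 - u3*w2)*X + (u1*w3 - u3*w1)*Y - (u1*w2 - u2*w1)*Z,
            (u2*v3 - u3*v2)*X - (u1*v3 - u3*v1)*Y + (u1*v2 - u2*v1)*Z, ?_, ?_⟩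
    · rintro ⟨h1, h2, h3⟩
      apply hnz
      refine ⟨?_, ?_, ?_⟩
      · have : X = u1*((v2*w3 - v3*w2)*X - (v1*w3 - v3*w1)*Y + (v1*w2 - v2*w1)*Z)
              + v1*(-(u2*w3 - u3*w2)*X + (u1*w3 - u3*w1)*Y - (u1*w2 - u2*w1)*Z)
              + w1*((u2*v3 - u3*v2)*X - (u1*v3 - u3*v1)*Y + (u1*v2 - u2*v1)*Z) := by
          linear_combination (-X) * h
        rw [this, h1, h2, h3]; ring
      · have : Y = u2*((v2*w3 - v3*w2)*X - (v1*w3 - v3*w1)*Y + (v1*w2 - v2*w1)*Z)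
              + v2*(-(u2*w3 - u3*w2)*X + (u1*w3 - u3*w1)*Y - (u1*w2 - u2*w1)*Z)
              + w2*((u2*v3 - u3*v2)*X - (u1*v3 - u3*v1)*Y + (u1*v2 - u2*v1)*Z) := by
          linear_combination (-Y) * h
        rw [this, h1, h2, h3]; ring
      · have : Z = u3*((v2*w3 - v3*w2)*X - (v1*w3 - v3*w1)*Y + (v1*w2 - v2*w1)*Z)
              + v3*(-(u2*w3 - u3*w2)*X + (u1*w3 - u3*w1)*Y - (u1*w2 - u2*w1)*Z)
              + w3*((u2*v3 - u3*v2)*X - (u1*v3 - u3*v1)*Y + (u1*v2 - u2*v1)*Z) := by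
          linear_combination (-Z) * h
        rw [this, h1, h2, h3]; ring
    · rw [Qt_subst]
      have e1 : u1*((v2*w3 - v3*w2)*X - (v1*w3 - v3*w1)*Y + (v1*w2 - v2*w1)*Z)
              + v1*(-(u2*w3 - u3*w2)*X + (u1*w3 - u3*w1)*Y - (u1*w2 - u2*w1)*Z)
              + w1*((u2*v3 - u3*v2)*X - (u1*v3 - u3*v1)*Y + (u1*v2 - u2*v1)*Z) = X := by
        linear_combination X * h
      have e2 : u2*((v2*w3 - v3*w2)*X - (v1*w3 - v3*w1)*Y + (v1*w2 - v2*w1)*Z)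
              + v2*(-(u2*w3 - u3*w2)*X + (u1*w3 - u3*w1)*Y - (u1*w2 - u2*w1)*Z)
              + w2*((u2*v3 - u3*v2)*X - (u1*v3 - u3*v1)*Y + (u1*v2 - u2*v1)*Z) = Y := by
        linear_combination Y * h
      have e3 : u3*((v2*w3 - v3*w2)*X - (v1*w3 - v3*w1)*Y + (v1*w2 - v2*w1)*Z)
              + v3*(-(u2*w3 - u3*w2)*X + (u1*w3 - u3*w1)*Y - (u1*w2 - u2*w1)*Z)
              + w3*((u2*v3 - u3*v2)*X - (u1*v3 - u3*v1)*Y + (u1*v2 - u2*v1)*Z) = Z := by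
        linear_combination Z * h
      rw [e1, e2, e3]; exact hval

lemma posT_of_repT (a b c d e f : ℤ) (h : ∀ N, RepT a b c d e f N → 0 < N) :
    PosT a b c d e f := fun x y z hnz => h _ ⟨x, y, z, hnz, rfl⟩

lemma posT_subst (a b c d e f u1 u2 u3 v1 v2 v3 w1 w2 w3 : ℤ)
    (h : det3 u1 u2 u3 v1 v2 v3 w1 w2 w3 = 1) (hpos : PosT a b c d e f) :
    PosT (Qt a b c d e f u1 u2 u3) (Qt a b c d e f v1 v2 v3) (Qt a b c d e f w1 w2 w3)
       (bil3 a b c d e f u1 u2 u3 v1 v2 v3) (bil3 a b c d e f u1 u2 u3 w1 w2 w3)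
       (bil3 a b c d e f v1 v2 v3 w1 w2 w3) := by
  apply posT_of_repT
  intro N hN
  rw [repT_subst _ _ _ _ _ _ _ _ _ _ _ _ _ _ _ h] at hN
  obtain ⟨x, y, z, hnz, hval⟩ := hN
  rw [← hval]; exact hpos x y z hnz

lemma Qt_scale (a b c d e f g x y z : ℤ) :
    Qt a b c d e f (g*x) (g*y) (g*z) = g^2 * Qt a b c d e f x y z := by
  simp only [Qt]; ring

lemma key_complete (m b c d e f x y z : ℤ) :
    m * Qt m b c d e f x y z
      = (m*x + d*y + e*z)^2 + Qb (m*b - d^2) (m*f - d*e) (m*c - e^2) y z := by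
  simp only [Qt, Qb]; ring

lemma key_det (m b c d e f : ℤ) :
    (m*b - d^2)*(m*c - e^2) - (m*f - d*e)^2 = m * Dt m b c d e f := by
  simp only [Dt]; ring

/-- Any positive integral ternary form of determinant 3 has minimum 1 and splits;
    its values are values of x²+y²+3z² or of x²+2y²+2yz+2z². -/
theorem classify (a b c d e f : ℤ) (hpos : PosT a b c d e f) (hdet : Dt a b c d e f = 3)
    (N : ℤ) (hN : RepT a b c d e f N) :
    (∃ x y z : ℤ, N = x^2 + y^2 + 3*z^2) ∨ (∃ x y z : ℤ, N = x^2 + 2*y^2 + 2*z^2 + 2*y*z) := by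
  -- the minimum of the form
  classical
  set SS : Set ℕ := {k : ℕ | RepT a b c d e f (k : ℤ)} with hSS
  have hane : 0 < a := by
    have := hpos 1 0 0 (by simp)
    simpa [Qt] using this
  have hSSne : SS.Nonempty := by
    refine ⟨a.toNat, ?_⟩
    simp only [hSS, Set.mem_setOf_eq]
    rw [Int.toNat_of_nonneg (by omega)]
    exact ⟨1, 0, 0, by simp, by simp [Qt]⟩
  set m : ℕ := sInf SS with hm
  have hmmem : RepT a b c d e f (m : ℤ) := Nat.sInf_mem hSSne
  have hmle : ∀ K, RepT a b c d e f K → (m : ℤ) ≤ K := by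
    intro K hK
    obtain ⟨x, y, z, hnz, hval⟩ := hK
    have hKpos : 0 < K := hval ▸ hpos x y z hnz
    have : K.toNat ∈ SS := by
      simp only [hSS, Set.mem_setOf_eq]
      rw [Int.toNat_of_nonneg (by omega)]
      exact ⟨x, y, z, hnz, hval⟩
    have := Nat.sInf_le this
    omega
  have hmpos : 0 < (m : ℤ) := by
    obtain ⟨x, y, z, hnz, hval⟩ := hmmem
    exact hval ▸ hpos x y z hnz
  obtain ⟨x₀, y₀, z₀, hnz₀, hv₀⟩ := hmmem
  -- primitivity of the minimal vector
  have hgy : ((Int.gcd y₀ z₀ : ℤ)) ∣ y₀ := Int.gcd_dvd_left y₀ z₀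
  have hgz : ((Int.gcd y₀ z₀ : ℤ)) ∣ z₀ := Int.gcd_dvd_right y₀ z₀
  have hgx3 : ((Int.gcd x₀ (Int.gcd y₀ z₀) : ℤ)) ∣ x₀ := Int.gcd_dvd_left _ _
  have hgyz3 : ((Int.gcd x₀ (Int.gcd y₀ z₀) : ℤ)) ∣ (Int.gcd y₀ z₀ : ℤ) := Int.gcd_dvd_right _ _
  set g : ℤ := (Int.gcd x₀ (Int.gcd y₀ z₀) : ℤ) with hgdef
  have hgy3 : g ∣ y₀ := dvd_trans hgyz3 hgy
  have hgz3 : g ∣ z₀ := dvd_trans hgyz3 hgz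
  have hgpos : 0 < g := by
    have : Int.gcd x₀ (Int.gcd y₀ z₀) ≠ 0 := by
      intro h
      rw [Int.gcd_eq_zero_iff] at h
      obtain ⟨h1, h2⟩ := h
      have h2' : ((Int.gcd y₀ z₀ : ℤ)) = 0 := by exact_mod_cast h2
      rw [Int.natCast_eq_zero] at h2' <;> try skip
      have := Int.gcd_eq_zero_iff.mp (by exact_mod_cast h2')
      exact hnz₀ ⟨h1, this.1, this.2⟩
    positivity
  obtain ⟨x₁, hx₁⟩ := hgx3
  obtain ⟨y₁, hy₁⟩ := hgy3
  obtain ⟨z₁, hz₁⟩ := hgz3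
  have hg1 : g = 1 := by
    by_contra hne
    have hg2 : 2 ≤ g := by omega
    have hnz1 : ¬(x₁ = 0 ∧ y₁ = 0 ∧ z₁ = 0) := by
      rintro ⟨h1, h2, h3⟩
      exact hnz₀ ⟨by simp [hx₁, h1], by simp [hy₁, h2], by simp [hz₁, h3]⟩
    have hKrep : RepT a b c d e f (Qt a b c d e f x₁ y₁ z₁) := ⟨x₁, y₁, z₁, hnz1, rfl⟩
    have hKge := hmle _ hKrep
    have hmeq : (m : ℤ) = g^2 * Qt a b c d e f x₁ y₁ z₁ := by
      rw [← hv₀, hx₁, hy₁, hz₁, Qt_scale]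
    have hQ1 : 0 < Qt a b c d e f x₁ y₁ z₁ := hpos _ _ _ hnz1
    have hg4 : (4:ℤ) ≤ g^2 := by nlinarith
    have h4K : 4 * Qt a b c d e f x₁ y₁ z₁ ≤ g^2 * Qt a b c d e f x₁ y₁ z₁ :=
      mul_le_mul_of_nonneg_right hg4 (le_of_lt hQ1)
    linarith
  -- construct a unimodular matrix with first column the minimal vector
  -- columns u = (x₀,y₀,z₀), v, w with det3 = 1
  obtain ⟨v1, v2, v3, w1, w2, w3, hdet3⟩ :
      ∃ v1 v2 v3 w1 w2 w3 : ℤ, det3 x₀ y₀ z₀ v1 v2 v3 w1 w2 w3 = 1 := by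
    by_cases hxy : x₀ = 0 ∧ y₀ = 0
    · obtain ⟨hx0, hy0⟩ := hxy
      have hzabs : ((z₀.natAbs : ℤ)) = 1 := by
        have h := hg1
        rw [hgdef, hx0, hy0] at h
        simpa [Int.gcd] using h
      have hz1 : z₀ = 1 ∨ z₀ = -1 := by
        rcases Int.natAbs_eq z₀ with h | h <;> omega
      refine ⟨1, 0, 0, 0, z₀, 0, ?_⟩
      simp only [det3, hx0, hy0]
      rcases hz1 with h | h <;> rw [h] <;> ring
    · have hd0 : Int.gcd x₀ y₀ ≠ 0 := by
        intro h
        rw [Int.gcd_eq_zero_iff] at h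
        exact hxy ⟨h.1, h.2⟩
      set d₀ : ℤ := (Int.gcd x₀ y₀ : ℤ) with hd₀
      have hd₀pos : 0 < d₀ := by positivity
      obtain ⟨x₂, hx₂⟩ : d₀ ∣ x₀ := Int.gcd_dvd_left x₀ y₀
      obtain ⟨y₂, hy₂⟩ : d₀ ∣ y₀ := Int.gcd_dvd_right x₀ y₀
      have hgcd12 : Int.gcd x₂ y₂ = 1 := by
        have h := Int.gcd_div_gcd_div_gcd (i := x₀) (j := y₀) (by omega)
        have e1 : x₀ / d₀ = x₂ := by rw [hx₂]; exact Int.mul_ediv_cancel_left _ (by omega)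
        have e2 : y₀ / d₀ = y₂ := by rw [hy₂]; exact Int.mul_ediv_cancel_left _ (by omega)
        rwa [← hd₀, e1, e2] at h
      have hbez1 : x₂ * Int.gcdA x₂ y₂ + y₂ * Int.gcdB x₂ y₂ = 1 := by
        have := Int.gcd_eq_gcd_ab x₂ y₂
        rw [hgcd12] at this
        exact_mod_cast this.symm
      have hgcd_dz : Int.gcd d₀ z₀ = 1 := by
        have h := Int.gcd_assoc x₀ y₀ z₀
        have : Int.gcd (Int.gcd x₀ y₀ : ℤ) z₀ = 1 := by
          rw [h]
          have : (g : ℤ) = 1 := hg1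
          have h2 : Int.gcd x₀ (Int.gcd y₀ z₀ : ℤ) = 1 := by
            have := hg1
            rw [hgdef] at this
            exact_mod_cast this
          exact h2
        exact this
      have hbez2 : d₀ * Int.gcdA d₀ z₀ + z₀ * Int.gcdB d₀ z₀ = 1 := by
        have := Int.gcd_eq_gcd_ab d₀ z₀
        rw [hgcd_dz] at this
        exact_mod_cast this.symm
      set lam := Int.gcdA x₂ y₂
      set mu := Int.gcdB x₂ y₂
      set s₀ := Int.gcdA d₀ z₀
      set kk := -Int.gcdB d₀ z₀
      refine ⟨-mu, lam, 0, kk*x₂, kk*y₂, s₀, ?_⟩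
      rw [hx₂, hy₂]
      simp only [det3]
      have hbez2' : d₀ * s₀ - z₀ * kk = 1 := by simp only [kk]; linarith
      linear_combination (d₀*s₀ - z₀*kk) * hbez1 + hbez2'
  -- stage 1: transform so that the (1,1) coefficient is m
  have hiff1 : ∀ K, RepT (Qt a b c d e f x₀ y₀ z₀) (Qt a b c d e f v1 v2 v3)
      (Qt a b c d e f w1 w2 w3) (bil3 a b c d e f x₀ y₀ z₀ v1 v2 v3)
      (bil3 a b c d e f x₀ y₀ z₀ w1 w2 w3) (bil3 a b c d e f v1 v2 v3 w1 w2 w3) K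
      ↔ RepT a b c d e f K := fun K => repT_subst a b c d e f x₀ y₀ z₀ v1 v2 v3 w1 w2 w3 hdet3 K
  have hpos1 := posT_subst a b c d e f x₀ y₀ z₀ v1 v2 v3 w1 w2 w3 hdet3 hpos
  have hdt1 : Dt (Qt a b c d e f x₀ y₀ z₀) (Qt a b c d e f v1 v2 v3)
      (Qt a b c d e f w1 w2 w3) (bil3 a b c d e f x₀ y₀ z₀ v1 v2 v3)
      (bil3 a b c d e f x₀ y₀ z₀ w1 w2 w3) (bil3 a b c d e f v1 v2 v3 w1 w2 w3) = 3 := by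
    rw [Dt_subst, hdet3, hdet]; ring
  rw [hv₀] at hiff1 hpos1 hdt1
  set B1 := Qt a b c d e f v1 v2 v3 with hB1
  set C1 := Qt a b c d e f w1 w2 w3 with hC1
  set D1 := bil3 a b c d e f x₀ y₀ z₀ v1 v2 v3 with hD1
  set E1 := bil3 a b c d e f x₀ y₀ z₀ w1 w2 w3 with hE1
  set F1 := bil3 a b c d e f v1 v2 v3 w1 w2 w3 with hF1
  have hrep1 : RepT (m : ℤ) B1 C1 D1 E1 F1 N := (hiff1 N).mpr hN
  have hlow1 : ∀ K, RepT (m : ℤ) B1 C1 D1 E1 F1 K → (m : ℤ) ≤ K :=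
    fun K hK => hmle K ((hiff1 K).mp hK)
  -- stage 2 : the associated binary form and the Hermite bound
  set HA := (m:ℤ) * B1 - D1^2 with hHA
  set HB := (m:ℤ) * F1 - D1*E1 with hHB
  set HC := (m:ℤ) * C1 - E1^2 with hHC
  have hposH : PosB HA HB HC := by
    intro y z hnzyz
    have hid : ((m:ℤ))^2 * Qb HA HB HC y z
        = (m:ℤ) * Qt (m:ℤ) B1 C1 D1 E1 F1 (-(D1*y + E1*z)) ((m:ℤ)*y) ((m:ℤ)*z) := by
      rw [hHA, hHB, hHC]; simp only [Qb, Qt]; ring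
    have hnzv : ¬((-(D1*y + E1*z)) = 0 ∧ (m:ℤ)*y = 0 ∧ (m:ℤ)*z = 0) := by
      rintro ⟨h1, h2, h3⟩
      apply hnzyz
      constructor
      · rcases mul_eq_zero.mp h2 with h | h
        · omega
        · exact h
      · rcases mul_eq_zero.mp h3 with h | h
        · omega
        · exact h
    have hQpos : 0 < Qt (m:ℤ) B1 C1 D1 E1 F1 (-(D1*y + E1*z)) ((m:ℤ)*y) ((m:ℤ)*z) := by
      have := hpos1 (-(D1*y + E1*z)) ((m:ℤ)*y) ((m:ℤ)*z) hnzv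
      exact this
    nlinarith
  have hdetH : HA*HC - HB^2 = 3*(m:ℤ) := by
    rw [hHA, hHB, hHC]
    have := key_det (m:ℤ) B1 C1 D1 E1 F1
    rw [hdt1] at this
    linarith
  -- minimum of the binary form
  obtain ⟨μ, hμpos, hμrep, hμmin⟩ := exists_min_binary HA HB HC hposH
  -- claim B : 4μ ≥ 3m²
  have hclaimB : 3*(m:ℤ)^2 ≤ 4*μ := by
    obtain ⟨y₁, z₁, hnzμ, hvμ⟩ := hμrep
    obtain ⟨xx, hxx⟩ := round_lemma (m:ℤ) (D1*y₁ + E1*z₁) hmpos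
    have hQge : (m:ℤ) ≤ Qt (m:ℤ) B1 C1 D1 E1 F1 xx y₁ z₁ :=
      hlow1 _ ⟨xx, y₁, z₁, by tauto, rfl⟩
    have hkey := key_complete (m:ℤ) B1 C1 D1 E1 F1 xx y₁ z₁
    rw [← hHA, ← hHB, ← hHC, hvμ] at hkey
    have hmm : (m:ℤ)*(m:ℤ) ≤ (m:ℤ) * Qt (m:ℤ) B1 C1 D1 E1 F1 xx y₁ z₁ :=
      mul_le_mul_of_nonneg_left hQge (le_of_lt hmpos)
    nlinarith [hxx, hkey, hmm]
  -- claim A : Hermite bound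
  have hclaimA : 3*μ^2 ≤ 4*(HA*HC - HB^2) := bherm HA HB HC μ hposH hμmin hμrep
  -- conclude m = 1
  have hm1 : (m:ℤ) = 1 := by
    have h0 : 0 ≤ 4*μ - 3*(m:ℤ)^2 := by linarith
    have h0' : 0 ≤ 4*μ + 3*(m:ℤ)^2 := by nlinarith [sq_nonneg ((m:ℤ))]
    have h1 : 0 ≤ (4*μ - 3*(m:ℤ)^2)*(4*μ + 3*(m:ℤ)^2) := mul_nonneg h0 h0'
    have h2 : μ^2 ≤ 4*(m:ℤ) := by nlinarith [hclaimA, hdetH]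
    have h3 : 9*(m:ℤ)^4 ≤ 64*(m:ℤ) := by nlinarith [h1]
    by_contra hne
    have hm2 : 2 ≤ (m:ℤ) := by omega
    have h8 : (8:ℤ) ≤ (m:ℤ)^3 := by nlinarith
    nlinarith
  rw [hm1] at hrep1 hlow1 hdt1 hpos1
  -- stage 3 : split off x²
  have hdet3' : det3 1 0 0 (-D1) 1 0 (-E1) 0 1 = 1 := by simp [det3]
  have hiff2 := fun K => repT_subst 1 B1 C1 D1 E1 F1 1 0 0 (-D1) 1 0 (-E1) 0 1 hdet3' K
  have hpos2 := posT_subst 1 B1 C1 D1 E1 F1 1 0 0 (-D1) 1 0 (-E1) 0 1 hdet3' (by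
    intro x y z hnz
    exact hpos1 x y z hnz)
  have hdt2 : Dt (Qt 1 B1 C1 D1 E1 F1 1 0 0) (Qt 1 B1 C1 D1 E1 F1 (-D1) 1 0)
      (Qt 1 B1 C1 D1 E1 F1 (-E1) 0 1) (bil3 1 B1 C1 D1 E1 F1 1 0 0 (-D1) 1 0)
      (bil3 1 B1 C1 D1 E1 F1 1 0 0 (-E1) 0 1) (bil3 1 B1 C1 D1 E1 F1 (-D1) 1 0 (-E1) 0 1) = 3 := by
    rw [Dt_subst, hdet3', hdt1]; ring
  have ea : Qt 1 B1 C1 D1 E1 F1 1 0 0 = 1 := by simp [Qt]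
  have eb : Qt 1 B1 C1 D1 E1 F1 (-D1) 1 0 = B1 - D1^2 := by simp only [Qt]; ring
  have ec : Qt 1 B1 C1 D1 E1 F1 (-E1) 0 1 = C1 - E1^2 := by simp only [Qt]; ring
  have ed : bil3 1 B1 C1 D1 E1 F1 1 0 0 (-D1) 1 0 = 0 := by simp only [bil3]; ring
  have ee : bil3 1 B1 C1 D1 E1 F1 1 0 0 (-E1) 0 1 = 0 := by simp only [bil3]; ring
  have ef : bil3 1 B1 C1 D1 E1 F1 (-D1) 1 0 (-E1) 0 1 = F1 - D1*E1 := by simp only [bil3]; ring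
  rw [ea, eb, ec, ed, ee, ef] at hiff2 hpos2 hdt2
  have hrep2 : RepT 1 (B1 - D1^2) (C1 - E1^2) 0 0 (F1 - D1*E1) N := (hiff2 N).mpr hrep1
  have hdtbin : (B1 - D1^2) * (C1 - E1^2) - (F1 - D1*E1)^2 = 3 := by
    have : Dt 1 (B1 - D1^2) (C1 - E1^2) 0 0 (F1 - D1*E1)
        = (B1 - D1^2) * (C1 - E1^2) - (F1 - D1*E1)^2 := by simp only [Dt]; ring
    rw [this] at hdt2
    exact hdt2
  obtain ⟨x, y, z, hnz, hval⟩ := hrep2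
  have hsplit : Qt 1 (B1 - D1^2) (C1 - E1^2) 0 0 (F1 - D1*E1) x y z
      = x^2 + Qb (B1 - D1^2) (F1 - D1*E1) (C1 - E1^2) y z := by
    simp only [Qt, Qb]; ring
  rw [hsplit] at hval
  by_cases hyz : y = 0 ∧ z = 0
  · left
    refine ⟨x, 0, 0, ?_⟩
    rw [← hval, hyz.1, hyz.2]
    simp [Qb]
  · have hposbin : PosB (B1 - D1^2) (F1 - D1*E1) (C1 - E1^2) := by
      intro yy zz hnzyz
      have h0 : Qt 1 (B1 - D1^2) (C1 - E1^2) 0 0 (F1 - D1*E1) 0 yy zz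
          = Qb (B1 - D1^2) (F1 - D1*E1) (C1 - E1^2) yy zz := by
        simp only [Qt, Qb]; ring
      have := hpos2 0 yy zz (by tauto)
      rwa [h0] at this
    have hK := bred ((B1 - D1^2) + (C1 - E1^2)).toNat (B1 - D1^2) (F1 - D1*E1) (C1 - E1^2)
      le_rfl hposbin hdtbin (Qb (B1 - D1^2) (F1 - D1*E1) (C1 - E1^2) y z) ⟨y, z, hyz, rfl⟩
    rcases hK with ⟨y', z', hK⟩ | ⟨y', z', hK⟩
    · left; exact ⟨x, y', z', by rw [← hval, hK]; ring⟩
    · right; exact ⟨x, y', z', by rw [← hval, hK]; ring⟩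



/-! ### arithmetic: construction of the form via Dirichlet -/

lemma sq_mod8 (w : ℤ) :
    (w % 4 = 0 ∧ w^2 % 8 = 0) ∨ (w % 4 = 2 ∧ w^2 % 8 = 4) ∨ (w % 2 = 1 ∧ w^2 % 8 = 1) := by
  have h0 : w % 4 = 0 ∨ w % 4 = 1 ∨ w % 4 = 2 ∨ w % 4 = 3 := by omega
  have hweq : w = 4*(w/4) + w % 4 := by omega
  have hkey : w^2 % 8 = (w % 4)^2 % 8 := by
    have : w^2 = (w % 4)^2 + 8*(2*(w/4)^2 + (w/4)*(w % 4)) := by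
      nth_rewrite 1 [hweq]; ring
    rw [this, Int.add_mul_emod_self_left]
  rcases h0 with h|h|h|h <;> rw [h] at hkey <;> norm_num at hkey <;> omega

lemma sq_mod3 (w : ℤ) :
    (w % 3 = 0 ∧ w^2 % 3 = 0) ∨ (w % 3 ≠ 0 ∧ w^2 % 3 = 1) := by
  have h0 : w % 3 = 0 ∨ w % 3 = 1 ∨ w % 3 = 2 := by omega
  have hweq : w = 3*(w/3) + w % 3 := by omega
  have hkey : w^2 % 3 = (w % 3)^2 % 3 := by
    have : w^2 = (w % 3)^2 + 3*(3*(w/3)^2 + 2*(w/3)*(w % 3)) := by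
      nth_rewrite 1 [hweq]; ring
    rw [this, Int.add_mul_emod_self_left]
  rcases h0 with h|h|h <;> rw [h] at hkey <;> norm_num at hkey <;> omega

/-- fix parities: from any representation we can get one with all variables odd. -/
lemma make_odd (M x y z : ℤ) (h8 : M % 8 = 5) (heq : M = x^2 + y^2 + 3*z^2) :
    ∃ p q r : ℤ, M = p^2 + q^2 + 3*r^2 ∧ p % 2 = 1 ∧ q % 2 = 1 ∧ r % 2 = 1 := by
  obtain ⟨X, hX⟩ : ∃ X, X = x^2 := ⟨_, rfl⟩
  obtain ⟨Y, hY⟩ : ∃ Y, Y = y^2 := ⟨_, rfl⟩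
  obtain ⟨Z, hZ⟩ : ∃ Z, Z = z^2 := ⟨_, rfl⟩
  have heq' : M = X + Y + 3*Z := by rw [hX, hY, hZ]; exact heq
  have hx := sq_mod8 x
  have hy := sq_mod8 y
  have hz := sq_mod8 z
  rw [← hX] at hx
  rw [← hY] at hy
  rw [← hZ] at hz
  -- transformation for an even pair u,v :  u² + 3v² = (u/2 - 3(v/2))² + 3(u/2 + v/2)²
  have pairid : ∀ u v : ℤ, u % 2 = 0 → v % 2 = 0 →
      u^2 + 3*v^2 = (u/2 - 3*(v/2))^2 + 3*(u/2 + v/2)^2 := by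
    intro u v hu hv
    have h1 : u = 2*(u/2) := by omega
    have h2 : v = 2*(v/2) := by omega
    nth_rewrite 1 [h1]
    nth_rewrite 1 [h2]
    ring
  rcases hx with ⟨hx4, hX8⟩|⟨hx4, hX8⟩|⟨hx2, hX8⟩ <;>
    rcases hy with ⟨hy4, hY8⟩|⟨hy4, hY8⟩|⟨hy2, hY8⟩ <;>
      rcases hz with ⟨hz4, hZ8⟩|⟨hz4, hZ8⟩|⟨hz2, hZ8⟩
  -- 27 cases; most impossible mod 8
  case _ => exfalso; omega
  all_goals try (exfalso; omega)
  -- y odd, x ≡ 0 (4), z ≡ 2 (4)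
  case _ =>
    refine ⟨y, x/2 - 3*(z/2), x/2 + z/2, ?_, hy2, by omega, by omega⟩
    have := pairid x z (by omega) (by omega)
    linarith [heq, this]
  -- y odd, x ≡ 2 (4), z ≡ 0 (4)
  case _ =>
    refine ⟨y, x/2 - 3*(z/2), x/2 + z/2, ?_, hy2, by omega, by omega⟩
    have := pairid x z (by omega) (by omega)
    linarith [heq, this]
  -- x odd, y ≡ 0 (4), z ≡ 2 (4)
  case _ =>
    refine ⟨x, y/2 - 3*(z/2), y/2 + z/2, ?_, hx2, by omega, by omega⟩
    have := pairid y z (by omega) (by omega)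
    linarith [heq, this]
  -- x odd, y ≡ 2 (4), z ≡ 0 (4)
  case _ =>
    refine ⟨x, y/2 - 3*(z/2), y/2 + z/2, ?_, hx2, by omega, by omega⟩
    have := pairid y z (by omega) (by omega)
    linarith [heq, this]
  -- all odd
  case _ => exact ⟨x, y, z, heq, hx2, hy2, hz2⟩

theorem rep3 (M : ℤ) (hpos : 5 ≤ M) (h8 : M % 8 = 5) (h3 : M % 3 ≠ 0) :
    ∃ x y z : ℤ, M = x^2 + y^2 + 3*z^2 := by
  have hModd : M % 2 = 1 := by omega
  have hM4 : M % 4 = 1 := by omega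
  -- gcd(12, M) = 1
  have hg12 : Int.gcd 12 M = 1 := by
    have h1 : Int.gcd 12 M = Nat.gcd 12 M.natAbs := rfl
    rw [h1]
    have h2 : Nat.gcd 12 M.natAbs = Nat.gcd (M.natAbs % 12) 12 := Nat.gcd_rec 12 M.natAbs
    have h4 : M.natAbs % 12 = 1 ∨ M.natAbs % 12 = 5 ∨ M.natAbs % 12 = 7 ∨ M.natAbs % 12 = 11 := by
      omega
    rw [h2]
    rcases h4 with h|h|h|h <;> rw [h] <;> rfl
  set Mn : ℕ := M.toNat with hMn
  have hMcast : (Mn : ℤ) = M := Int.toNat_of_nonneg (by omega)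
  set al := Int.gcdA 12 M with hal
  set ga := Int.gcdB 12 M with hga
  have hbez : 12*al + M*ga = 1 := by
    have h := Int.gcd_eq_gcd_ab 12 M
    rw [hg12] at h
    exact_mod_cast h.symm
  set A : ℤ := 1 - 24*al with hA
  set n₀ : ℕ := 12 * Mn with hn₀
  have hn₀pos : 0 < n₀ := by omega
  haveI : NeZero n₀ := ⟨by omega⟩
  have hn₀cast : ((n₀ : ℕ) : ℤ) = 12 * M := by rw [hn₀]; push_cast [hMcast]; ring
  have hid : A * A = 1 + (12*M)*(-4*al*ga) := by rw [hA]; linear_combination (48*al) * hbez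
  have h0 : ((12*M : ℤ) : ZMod n₀) = 0 := by
    rw [← hn₀cast]
    exact_mod_cast ZMod.natCast_self n₀
  have hAA : (A : ZMod n₀) * (A : ZMod n₀) = 1 := by
    have hc : ((A*A : ℤ) : ZMod n₀) = ((1 + (12*M)*(-4*al*ga) : ℤ) : ZMod n₀) := by rw [hid]
    push_cast at hc
    rw [show ((12:ZMod n₀) * ((M:ℤ) : ZMod n₀)) = ((12*M : ℤ) : ZMod n₀) by push_cast; ring] at hc
    rw [h0] at hc
    simpa using hc
  have hAunit : IsUnit ((A : ℤ) : ZMod n₀) := IsUnit.of_mul_eq_one _ hAA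
  obtain ⟨q, hqgt, hqprime, hqmod⟩ := Nat.forall_exists_prime_gt_and_eq_mod hAunit n₀
  haveI : Fact q.Prime := ⟨hqprime⟩
  have hdvd : ((n₀:ℕ) : ℤ) ∣ (q : ℤ) - A := by
    rw [← ZMod.intCast_zmod_eq_zero_iff_dvd]
    push_cast
    rw [hqmod]
    ring
  rw [hn₀cast] at hdvd
  have hq12 : (q:ℤ) % 12 = 1 := by
    have h12 : (12:ℤ) ∣ (q:ℤ) - A := dvd_trans ⟨M, by ring⟩ hdvd
    omega
  have hq4 : q % 4 = 1 := by omega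
  have hq3 : q % 3 = 1 := by omega
  have hqM : M ∣ (q:ℤ) + 1 := by
    have hMd : M ∣ (12*M : ℤ) := ⟨12, by ring⟩
    have h1 : M ∣ (q:ℤ) - A := dvd_trans hMd hdvd
    have h2 : M ∣ A + 1 := ⟨2*ga, by rw [hA]; linear_combination (-2)*hbez⟩
    have hsum := dvd_add h1 h2
    have h3' : (q:ℤ) - A + (A + 1) = (q:ℤ) + 1 := by ring
    rwa [h3'] at hsum
  have hqbig : (12*M : ℤ) < (q:ℤ) := by
    have : n₀ < q := hqgt
    omega
  have hqodd : Odd q := by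
    rw [Nat.odd_iff]; omega
  -- Jacobi symbol computation
  have hJm1 : J(-1 | q) = 1 := by
    rw [jacobiSym.at_neg_one hqodd]
    exact ZMod.χ₄_nat_one_mod_four hq4
  have hJ3 : J(3 | q) = 1 := by
    have h2 : J(((3:ℕ):ℤ) | q) = J(((q:ℕ):ℤ) | 3) :=
      jacobiSym.quadratic_reciprocity_one_mod_four' (by decide : Odd 3) hq4
    have h3 : J(((q:ℕ):ℤ) | 3) = J((1:ℤ) | 3) := jacobiSym.mod_left' (by omega)
    have h4 : ((3:ℕ):ℤ) = (3:ℤ) := by norm_num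
    rw [← h4, h2, h3]
    exact jacobiSym.one_left 3
  have hJM : J(M | q) = 1 := by
    have hMn4 : Mn % 4 = 1 := by omega
    have h := jacobiSym.quadratic_reciprocity_one_mod_four hMn4 hqodd
    have h3 : J((q:ℤ) | Mn) = J((-1:ℤ) | Mn) := by
      apply jacobiSym.mod_left'
      rw [Int.emod_eq_emod_iff_emod_sub_eq_zero]
      have he : (q:ℤ) - (-1) = (q:ℤ) + 1 := by ring
      rw [he]
      have hd : ((Mn:ℤ)) ∣ ((q:ℤ) + 1) := by rw [hMcast]; exact hqM
      exact Int.emod_eq_zero_of_dvd hd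
    have hMnodd : Odd Mn := by rw [Nat.odd_iff]; omega
    rw [← hMcast]
    rw [show ((Mn:ℤ)) = ((Mn:ℕ) : ℤ) by norm_num]
    rw [h, h3, jacobiSym.at_neg_one hMnodd]
    exact ZMod.χ₄_nat_one_mod_four hMn4
  have hJ : J(-3*M | q) = 1 := by
    have hsplit : ((-3*M : ℤ)) = (-1) * (3 * M) := by ring
    rw [hsplit, jacobiSym.mul_left, jacobiSym.mul_left, hJm1, hJ3, hJM]
    ring
  have hsq : IsSquare ((-3*M : ℤ) : ZMod q) := ZMod.isSquare_of_jacobiSym_eq_one hJ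
  have hMne : ((M : ℤ) : ZMod q) ≠ 0 := by
    rw [Ne, ZMod.intCast_zmod_eq_zero_iff_dvd]
    intro hd
    have := Int.le_of_dvd (by omega) hd
    omega
  obtain ⟨rr, hrr⟩ := hsq
  set tq : ZMod q := rr * ((M:ℤ) : ZMod q)⁻¹ with htq
  have htval : ((M:ℤ):ZMod q) * tq^2 = -3 := by
    rw [htq]
    have hinv : ((M:ℤ):ZMod q) * ((M:ℤ):ZMod q)⁻¹ = 1 := ZMod.mul_inv_of_unit _ (Ne.isUnit hMne)
    have hrr' : rr * rr = ((-3:ℤ):ZMod q) * ((M:ℤ):ZMod q) := by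
      rw [← hrr]; push_cast; ring
    field_simp
    linear_combination hrr'
  set T : ℤ := (tq.val : ℤ) with hT
  have hTcast : ((T:ℤ) : ZMod q) = tq := by
    rw [hT]
    push_cast
    rw [ZMod.natCast_val, ZMod.cast_id]
  have hqdvd : (q:ℤ) ∣ M*T^2 + 3 := by
    rw [← ZMod.intCast_zmod_eq_zero_iff_dvd]
    push_cast
    rw [hTcast, htval]
    ring
  obtain ⟨u, hu⟩ := hqdvd
  obtain ⟨s, hs⟩ := hqM
  have hDt : Dt M s u 1 0 T = 3 := by
    simp only [Dt]
    linear_combination (-u)*hs - hu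
  have hqpos : 0 < (q:ℤ) := by omega
  have hMpos : 0 < M := by omega
  have hposT : PosT M s u 1 0 T := by
    intro x y z hnz
    have hid2 : (M*(q:ℤ)) * Qt M s u 1 0 T x y z
        = (q:ℤ)*(M*x + y)^2 + ((q:ℤ)*y + M*T*z)^2 + 3*M*z^2 := by
      simp only [Qt]
      linear_combination (-(q:ℤ)*y^2) * hs + (-(M*z^2)) * hu
    have hrhs : 0 < (q:ℤ)*(M*x + y)^2 + ((q:ℤ)*y + M*T*z)^2 + 3*M*z^2 := by
      by_cases hz : z = 0
      · by_cases hy : y = 0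
        · have hx : x ≠ 0 := by tauto
          have hMx : M*x + y ≠ 0 := by
            rw [hy, add_zero]
            exact mul_ne_zero (by omega) hx
          have h1 : 0 < (M*x+y)^2 := lt_of_le_of_ne (sq_nonneg _) (Ne.symm (pow_ne_zero 2 hMx))
          nlinarith [sq_nonneg ((q:ℤ)*y + M*T*z), sq_nonneg z]
        · have hqy : (q:ℤ)*y + M*T*z ≠ 0 := by
            rw [hz]
            simpa using mul_ne_zero (show (q:ℤ) ≠ 0 by omega) hy
          have h1 : 0 < ((q:ℤ)*y + M*T*z)^2 :=
            lt_of_le_of_ne (sq_nonneg _) (Ne.symm (pow_ne_zero 2 hqy))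
          nlinarith [sq_nonneg (M*x+y), sq_nonneg z]
      · have h1 : 0 < z^2 := lt_of_le_of_ne (sq_nonneg _) (Ne.symm (pow_ne_zero 2 hz))
        nlinarith [sq_nonneg (M*x+y), sq_nonneg ((q:ℤ)*y + M*T*z)]
    nlinarith [hid2, hrhs, mul_pos hMpos hqpos]
  have hRep : RepT M s u 1 0 T M := ⟨1, 0, 0, by simp, by simp [Qt]⟩
  rcases classify M s u 1 0 T hposT hDt M hRep with h | h
  · exact h
  · exfalso
    obtain ⟨x, y, z, hxyz⟩ := h
    have hno : ∀ a b c : ZMod 8, a^2 + 2*b^2 + 2*c^2 + 2*b*c ≠ 5 := by decide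
    have hc := congrArg (fun t : ℤ => (t : ZMod 8)) hxyz
    push_cast at hc
    have h5 : ((M:ℤ) : ZMod 8) = (5 : ZMod 8) := by
      have : ((M:ℤ) : ZMod 8) = ((5:ℤ) : ZMod 8) := by
        rw [ZMod.intCast_eq_intCast_iff']
        omega
      simpa using this
    rw [h5] at hc
    exact hno _ _ _ hc.symm


lemma ceil3 (w : ℤ) : ⌈((w:ℚ))/3⌉ = (w+2)/3 := by
  have h1 : ((w:ℚ))/3 = -(((-w : ℤ) : ℚ)/((3:ℕ):ℚ)) := by push_cast; ring
  rw [h1, Int.ceil_neg, Rat.floor_intCast_div_natCast]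
  omega

lemma signfix (p : ℤ) (h2 : p % 2 = 1) (h3 : p % 3 ≠ 0) : ∃ K : ℤ, p^2 = (6*K+1)^2 := by
  rcases (by omega : p % 6 = 1 ∨ p % 6 = 5) with h|h
  · refine ⟨(p-1)/6, ?_⟩
    have hp : p = 6*((p-1)/6)+1 := by omega
    rw [← hp]
  · refine ⟨(-p-1)/6, ?_⟩
    have hp : -p = 6*((-p-1)/6)+1 := by omega
    rw [← hp]; ring

lemma finish_even (n : ℕ) (M p q r : ℤ) (hM : M = 12*(n:ℤ)+5)
    (heq : M = p^2 + q^2 + 3*r^2) (hp2 : p%2 = 1) (hq2 : q%2 = 1) (hr2 : r%2 = 1)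
    (hp3 : p%3 ≠ 0) (hq3 : q%3 ≠ 0) :
    ∃ x y z : ℤ, (3:ℤ) ∣ y*(y+1) ∧
      (n:ℤ) = x*(x+1) + y*(y+1)/3 + ⌈(z*(z+1):ℚ)/3⌉ := by
  obtain ⟨K, hK⟩ := signfix p hp2 hp3
  set X := (r-1)/2 with hXdef
  have hr : r = 2*X+1 := by omega
  set Z := (q-1)/2 with hZdef
  have hq : q = 2*Z+1 := by omega
  have hZ3 : Z % 3 ≠ 1 := by omega
  have h3dvd : (3:ℤ) ∣ Z*(Z+1) := by
    rcases (by omega : Z % 3 = 0 ∨ Z % 3 = 2) with h|h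
    · exact dvd_mul_of_dvd_left ⟨Z/3, by omega⟩ _
    · exact dvd_mul_of_dvd_right ⟨(Z+1)/3, by omega⟩ _
  obtain ⟨W, hW⟩ := h3dvd
  refine ⟨X, 3*K, Z, ⟨K*(3*K+1), by ring⟩, ?_⟩
  have hyterm : 3*K*(3*K+1)/3 = K*(3*K+1) := by
    rw [show 3*K*(3*K+1) = 3*(K*(3*K+1)) by ring]
    exact Int.mul_ediv_cancel_left _ (by norm_num)
  have hcast : ((Z:ℚ) * ((Z:ℚ)+1)) = ((Z*(Z+1) : ℤ) : ℚ) := by push_cast; ring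
  have hceil : ⌈((Z:ℚ) * ((Z:ℚ)+1))/3⌉ = W := by
    rw [hcast, ceil3, hW]
    omega
  rw [hyterm]
  rw [show ((Z:ℚ) * ((Z:ℚ)+1)) = ((Z*(Z+1) : ℤ) : ℚ) from hcast] <;> try skip
  rw [ceil3, hW, show (3*W+2)/3 = W by omega]
  rw [hq, hr] at heq
  rw [hK] at heq
  linarith [heq, hM]

lemma finish_odd (n : ℕ) (M p q r : ℤ) (hM : M = 12*(n:ℤ)+1)
    (heq : M = p^2 + q^2 + 3*r^2) (hp2 : p%2 = 1) (hq2 : q%2 = 1) (hr2 : r%2 = 1)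
    (hp3 : p%3 ≠ 0) (hq3 : q%3 = 0) :
    ∃ x y z : ℤ, (3:ℤ) ∣ y*(y+1) ∧
      (n:ℤ) = x*(x+1) + y*(y+1)/3 + ⌈(z*(z+1):ℚ)/3⌉ := by
  obtain ⟨K, hK⟩ := signfix p hp2 hp3
  set X := (r-1)/2 with hXdef
  have hr : r = 2*X+1 := by omega
  set d := q/3 with hddef
  have hd : q = 3*d := by omega
  have hd2 : d % 2 = 1 := by omega
  set m₀ := (d-1)/2 with hm₀def
  have hm₀ : d = 2*m₀+1 := by omega
  obtain ⟨E, hE⟩ : ∃ E : ℤ, E = 3*m₀^2+3*m₀ := ⟨_, rfl⟩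
  refine ⟨X, 3*K, 3*m₀+1, ⟨K*(3*K+1), by ring⟩, ?_⟩
  have hyterm : 3*K*(3*K+1)/3 = K*(3*K+1) := by
    rw [show 3*K*(3*K+1) = 3*(K*(3*K+1)) by ring]
    exact Int.mul_ediv_cancel_left _ (by norm_num)
  have hzz : (3*m₀+1 : ℤ)*((3*m₀+1)+1) = 3*E+2 := by rw [hE]; ring
  have hcast : (((3*m₀+1 : ℤ):ℚ) * (((3*m₀+1 : ℤ):ℚ)+1)) = (((3*m₀+1 : ℤ)*((3*m₀+1)+1) : ℤ) : ℚ) := by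
    push_cast; ring
  rw [hyterm]
  rw [hcast, ceil3, hzz, show (3*E+2+2)/3 = E+1 by omega]
  rw [hd, hm₀, hr] at heq
  rw [hK] at heq
  have hE' : E = 3*m₀^2+3*m₀ := hE
  linarith [heq, hM, hE']

end S15

theorem stmt15 (n : ℕ) :
    ∃ x y z : ℤ, (3 : ℤ) ∣ y*(y+1) ∧
      (n : ℤ) = x*(x+1) + y*(y+1)/3 + ⌈(z*(z+1) : ℚ)/3⌉ := by
  have hn0 : (0:ℤ) ≤ (n:ℤ) := by positivity
  rcases Nat.even_or_odd n with he | ho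
  · obtain ⟨j, hj⟩ := he
    have hn : (n:ℤ) = (j:ℤ) + (j:ℤ) := by exact_mod_cast hj
    set M : ℤ := 12*(n:ℤ) + 5 with hM
    have h8 : M % 8 = 5 := by omega
    have h3 : M % 3 ≠ 0 := by omega
    obtain ⟨x0, y0, z0, heq0⟩ := S15.rep3 M (by omega) h8 h3
    obtain ⟨p, q, r, heq, hp2, hq2, hr2⟩ := S15.make_odd M x0 y0 z0 h8 heq0
    obtain ⟨P2, hP2⟩ : ∃ P2 : ℤ, P2 = p^2 := ⟨_, rfl⟩
    obtain ⟨Q2, hQ2⟩ : ∃ Q2 : ℤ, Q2 = q^2 := ⟨_, rfl⟩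
    obtain ⟨R2, hR2⟩ : ∃ R2 : ℤ, R2 = r^2 := ⟨_, rfl⟩
    have heq' : M = P2 + Q2 + 3*R2 := by rw [hP2, hQ2, hR2]; exact heq
    have hsp := S15.sq_mod3 p
    have hsq := S15.sq_mod3 q
    rw [← hP2] at hsp
    rw [← hQ2] at hsq
    have hsr := S15.sq_mod3 r
    rw [← hR2] at hsr
    have hpq3 : p % 3 ≠ 0 ∧ q % 3 ≠ 0 := by omega
    exact S15.finish_even n M p q r hM heq hp2 hq2 hr2 hpq3.1 hpq3.2
  · obtain ⟨j, hj⟩ := ho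
    have hn : (n:ℤ) = 2*(j:ℤ) + 1 := by exact_mod_cast hj
    set M : ℤ := 12*(n:ℤ) + 1 with hM
    have h8 : M % 8 = 5 := by omega
    have h3 : M % 3 ≠ 0 := by omega
    obtain ⟨x0, y0, z0, heq0⟩ := S15.rep3 M (by omega) h8 h3
    obtain ⟨p, q, r, heq, hp2, hq2, hr2⟩ := S15.make_odd M x0 y0 z0 h8 heq0
    obtain ⟨P2, hP2⟩ : ∃ P2 : ℤ, P2 = p^2 := ⟨_, rfl⟩
    obtain ⟨Q2, hQ2⟩ : ∃ Q2 : ℤ, Q2 = q^2 := ⟨_, rfl⟩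
    obtain ⟨R2, hR2⟩ : ∃ R2 : ℤ, R2 = r^2 := ⟨_, rfl⟩
    have heq' : M = P2 + Q2 + 3*R2 := by rw [hP2, hQ2, hR2]; exact heq
    have hsp := S15.sq_mod3 p
    have hsq := S15.sq_mod3 q
    have hsr := S15.sq_mod3 r
    rw [← hP2] at hsp
    rw [← hQ2] at hsq
    rw [← hR2] at hsr
    have hx : (p % 3 = 0 ∧ q % 3 ≠ 0) ∨ (p % 3 ≠ 0 ∧ q % 3 = 0) := by omega
    rcases hx with ⟨h1, h2⟩ | ⟨h1, h2⟩
    · have heq2 : M = q^2 + p^2 + 3*r^2 := by linarith [heq]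
      exact S15.finish_odd n M q p r hM heq2 hq2 hp2 hr2 h2 h1
    · exact S15.finish_odd n M p q r hM heq hp2 hq2 hr2 h1 h2
end

section
/- For every integer a > 1, every natural number n can be written as ⌊(x^2 + y^2 + z^2)/a⌋ for some integers x, y, z. -/
set_option maxHeartbeats 1000000

namespace TSQ

/-- Rounding: we can translate `d` by a multiple of `a` into `[-a/2, a/2]`. -/
lemma round_lemma (a d : ℤ) (ha : 0 < a) :
    ∃ s : ℤ, -a ≤ 2*(d + a*s) ∧ 2*(d + a*s) ≤ a := by
  refine ⟨-((2*d + a) / (2*a)), ?_, ?_⟩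
  · have h := Int.emod_nonneg (2*d+a) (by positivity : (2*a) ≠ 0)
    have h2 := Int.mul_ediv_add_emod (2*d+a) (2*a)
    linarith
  · have h := Int.emod_lt_of_pos (2*d+a) (by positivity : (0:ℤ) < 2*a)
    have h2 := Int.mul_ediv_add_emod (2*d+a) (2*a)
    linarith

/-! ### Binary quadratic forms -/

structure B2 where
  a : ℤ
  b : ℤ
  c : ℤ

namespace B2

def val (Q : B2) (y z : ℤ) : ℤ := Q.a*y^2 + 2*Q.b*y*z + Q.c*z^2
def det (Q : B2) : ℤ := Q.a*Q.c - Q.b^2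
def Pos (Q : B2) : Prop := ∀ y z : ℤ, (y ≠ 0 ∨ z ≠ 0) → 0 < Q.val y z

def Prim (y z : ℤ) : Prop := Int.gcd y z = 1

lemma prim_iff (y z : ℤ) : Prim y z ↔ ∀ k : ℤ, k ∣ y → k ∣ z → k ∣ 1 := by
  constructor
  · intro h k hy hz
    have := Int.dvd_coe_gcd hy hz
    rwa [h] at this
  · intro h
    have h1 : (Int.gcd y z : ℤ) ∣ 1 := h _ (Int.gcd_dvd_left _ _) (Int.gcd_dvd_right _ _)
    have := Int.isUnit_iff.mp (isUnit_of_dvd_one h1)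
    unfold Prim
    omega

lemma prim_ne_zero {y z : ℤ} (h : Prim y z) : y ≠ 0 ∨ z ≠ 0 := by
  by_contra hc
  push_neg at hc
  unfold Prim at h
  rw [hc.1, hc.2] at h
  simp [Int.gcd] at h

lemma val_10 (Q : B2) : Q.val 1 0 = Q.a := by simp [val]
lemma val_01 (Q : B2) : Q.val 0 1 = Q.c := by simp [val]

lemma prim_10 : Prim 1 0 := by simp [Prim, Int.gcd]
lemma prim_01 : Prim 0 1 := by simp [Prim, Int.gcd]

def tr (Q : B2) (p q r s : ℤ) : B2 :=
  ⟨Q.val p q, Q.a*p*r + Q.b*(p*s + q*r) + Q.c*q*s, Q.val r s⟩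

lemma tr_val (Q : B2) (p q r s y z : ℤ) :
    (Q.tr p q r s).val y z = Q.val (p*y + r*z) (q*y + s*z) := by
  simp only [tr, val]; ring

lemma tr_det (Q : B2) (p q r s : ℤ) :
    (Q.tr p q r s).det = (p*s - q*r)^2 * Q.det := by
  simp only [tr, det, val]; ring

lemma tr_prim {p q r s : ℤ} (hU : p*s - q*r = 1) (y z : ℤ) :
    Prim y z ↔ Prim (p*y + r*z) (q*y + s*z) := by
  rw [prim_iff, prim_iff]
  constructor
  · intro h k h1 h2
    refine h k ?_ ?_
    · have : s*(p*y + r*z) - r*(q*y + s*z) = y := by linear_combination y * hU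
      rw [← this]; exact dvd_sub (h1.mul_left s) (h2.mul_left r)
    · have : -q*(p*y + r*z) + p*(q*y + s*z) = z := by linear_combination z * hU
      rw [← this]
      exact dvd_add (h1.mul_left (-q)) (h2.mul_left p)
  · intro h k h1 h2
    exact h k (dvd_add (h1.mul_left p) (h2.mul_left r))
      (dvd_add (h1.mul_left q) (h2.mul_left s))

lemma tr_pos {Q : B2} {p q r s : ℤ} (hU : p*s - q*r = 1) (hQ : Q.Pos) :
    (Q.tr p q r s).Pos := by
  intro y z hyz
  rw [tr_val]
  refine hQ _ _ ?_
  by_contra hc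
  push_neg at hc
  have hy : y = 0 := by
    have : s*(p*y + r*z) - r*(q*y + s*z) = y := by linear_combination y * hU
    rw [hc.1, hc.2] at this; linarith
  have hz : z = 0 := by
    have : -q*(p*y + r*z) + p*(q*y + s*z) = z := by linear_combination z * hU
    rw [hc.1, hc.2] at this; linarith
  rcases hyz with h | h <;> [exact h hy; exact h hz]

lemma tr_surj {Q : B2} {p q r s : ℤ} (hU : p*s - q*r = 1) (y z : ℤ) :
    ∃ y' z', (Q.tr p q r s).val y' z' = Q.val y z := by
  refine ⟨s*y - r*z, -(q*y) + p*z, ?_⟩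
  have h1 : p*(s*y - r*z) + r*(-(q*y) + p*z) = y := by linear_combination y * hU
  have h2 : q*(s*y - r*z) + s*(-(q*y) + p*z) = z := by linear_combination z * hU
  rw [tr_val, h1, h2]

/-- scaling -/
lemma val_smul (Q : B2) (k y z : ℤ) : Q.val (k*y) (k*z) = k^2 * Q.val y z := by
  simp only [val]; ring

/-- minimum over primitive vectors exists -/
lemma exists_min (Q : B2) (hQ : Q.Pos) :
    ∃ y z : ℤ, Prim y z ∧ ∀ y' z', Prim y' z' → Q.val y z ≤ Q.val y' z' := by
  set S : Set ℕ := {k | ∃ y z, Prim y z ∧ Q.val y z = (k : ℤ)} with hS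
  have hne : S.Nonempty := by
    refine ⟨(Q.val 1 0).toNat, 1, 0, prim_10, ?_⟩
    rw [Int.toNat_of_nonneg (le_of_lt (hQ 1 0 (by simp)))]
  obtain ⟨y, z, hprim, hval⟩ := Nat.sInf_mem hne
  refine ⟨y, z, hprim, fun y' z' h' => ?_⟩
  have hmem : (Q.val y' z').toNat ∈ S := by
    refine ⟨y', z', h', ?_⟩
    rw [Int.toNat_of_nonneg (le_of_lt (hQ y' z' (prim_ne_zero h')))]
  have := Nat.sInf_le hmem
  rw [hval]
  have h2 : ((Q.val y' z').toNat : ℤ) = Q.val y' z' :=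
    Int.toNat_of_nonneg (le_of_lt (hQ y' z' (prim_ne_zero h')))
  omega

/-- completion of a primitive vector to a unimodular 2x2 matrix -/
lemma completion {y z : ℤ} (h : Prim y z) :
    ∃ r s, y*s - z*r = 1 := by
  have hb := Int.gcd_eq_gcd_ab y z
  rw [(show Int.gcd y z = 1 from h)] at hb
  push_cast at hb
  exact ⟨-(Int.gcdB y z), Int.gcdA y z, by linear_combination -hb⟩

/-- Hermite bound for the binary minimum: `3 μ² ≤ 4 det`. -/
lemma min_bound (Q : B2) (hQ : Q.Pos) (y₀ z₀ : ℤ) (hp : Prim y₀ z₀)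
    (hmin : ∀ y z, Prim y z → Q.val y₀ z₀ ≤ Q.val y z) :
    3 * (Q.val y₀ z₀)^2 ≤ 4 * Q.det := by
  obtain ⟨r, s, hU⟩ := completion hp
  set μ := Q.val y₀ z₀ with hμ
  have hμpos : 0 < μ := hQ _ _ (prim_ne_zero hp)
  set Q₁ := Q.tr y₀ z₀ r s with hQ₁
  have hU1 : y₀*s - z₀*r = 1 := hU
  have hQ₁a : Q₁.a = μ := rfl
  have hmin₁ : ∀ y z, Prim y z → μ ≤ Q₁.val y z := by
    intro y z hyz
    rw [tr_val]
    exact hmin _ _ ((tr_prim hU1 y z).mp hyz)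
  -- shear
  obtain ⟨t, ht1, ht2⟩ := round_lemma μ Q₁.b hμpos
  set Q₂ := Q₁.tr 1 0 t 1 with hQ₂
  have hU2 : (1:ℤ)*1 - 0*t = 1 := by ring
  have hQ₂a : Q₂.a = μ := by
    show Q₁.val 1 0 = μ
    rw [val_10, hQ₁a]
  have hQ₂b : 2*Q₂.b = 2*(Q₁.b + μ*t) := by
    show 2*(Q₁.a*1*t + Q₁.b*(1*1 + 0*t) + Q₁.c*0*1) = _
    rw [hQ₁a]; ring
  have hmin₂ : ∀ y z, Prim y z → μ ≤ Q₂.val y z := by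
    intro y z hyz
    rw [tr_val]
    exact hmin₁ _ _ ((tr_prim hU2 y z).mp hyz)
  have hc : μ ≤ Q₂.c := by
    rw [← val_01 Q₂]
    exact hmin₂ 0 1 prim_01
  have hdet : Q₂.det = Q.det := by
    rw [hQ₂, tr_det, hQ₁, tr_det, hU1, hU2]; ring
  have hdet2 : Q₂.det = Q₂.a * Q₂.c - Q₂.b^2 := rfl
  nlinarith [sq_nonneg (2*Q₂.b), hμpos, hc, hQ₂a, hdet, hdet2, ht1, ht2, hQ₂b]

/-- Every positive definite integral binary form of determinant 1 represents
only sums of two squares. -/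
lemma main (Q : B2) (hQ : Q.Pos) (hdet : Q.det = 1) (y z : ℤ) :
    ∃ u v, Q.val y z = u^2 + v^2 := by
  obtain ⟨y₀, z₀, hp, hmin⟩ := exists_min Q hQ
  have hbd := min_bound Q hQ y₀ z₀ hp hmin
  have hμpos : 0 < Q.val y₀ z₀ := hQ _ _ (prim_ne_zero hp)
  have hμ1 : Q.val y₀ z₀ = 1 := by nlinarith
  obtain ⟨r, s, hU⟩ := completion hp
  set Q₁ := Q.tr y₀ z₀ r s with hQ₁
  have hU1 : y₀*s - z₀*r = 1 := hU
  have hQ₁a : Q₁.a = 1 := hμ1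
  obtain ⟨t, ht1, ht2⟩ := round_lemma 1 Q₁.b one_pos
  set Q₂ := Q₁.tr 1 0 t 1 with hQ₂
  have hU2 : (1:ℤ)*1 - 0*t = 1 := by ring
  have hQ₂a : Q₂.a = 1 := by
    show Q₁.val 1 0 = 1
    rw [val_10, hQ₁a]
  have hQ₂b : Q₂.b = 0 := by
    have : Q₂.b = Q₁.a*1*t + Q₁.b*(1*1 + 0*t) + Q₁.c*0*1 := rfl
    rw [hQ₁a] at this
    omega
  have hdet₂ : Q₂.det = 1 := by
    rw [hQ₂, tr_det, hQ₁, tr_det, hU1, hU2, hdet]; ring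
  have hQ₂c : Q₂.c = 1 := by
    have : Q₂.det = Q₂.a * Q₂.c - Q₂.b^2 := rfl
    rw [hQ₂a, hQ₂b, hdet₂] at this
    omega
  obtain ⟨y1, z1, h1⟩ := tr_surj (Q := Q) hU1 y z
  obtain ⟨y2, z2, h2⟩ := tr_surj (Q := Q₁) hU2 y1 z1
  refine ⟨y2, z2, ?_⟩
  rw [← h1, ← h2]
  show Q₂.a*y2^2 + 2*Q₂.b*y2*z2 + Q₂.c*z2^2 = _
  rw [hQ₂a, hQ₂b, hQ₂c]; ring

end B2

/-! ### Ternary quadratic forms -/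

structure T3 where
  a : ℤ
  b : ℤ
  c : ℤ
  d : ℤ
  e : ℤ
  f : ℤ

namespace T3

def val (Q : T3) (x y z : ℤ) : ℤ :=
  Q.a*x^2 + Q.b*y^2 + Q.c*z^2 + 2*(Q.d*x*y + Q.e*x*z + Q.f*y*z)

def bil (Q : T3) (x1 x2 x3 y1 y2 y3 : ℤ) : ℤ :=
  Q.a*x1*y1 + Q.b*x2*y2 + Q.c*x3*y3 + Q.d*(x1*y2+x2*y1) + Q.e*(x1*y3+x3*y1)
    + Q.f*(x2*y3+x3*y2)

def det (Q : T3) : ℤ :=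
  Q.a*Q.b*Q.c + 2*Q.d*Q.e*Q.f - Q.a*Q.f^2 - Q.b*Q.e^2 - Q.c*Q.d^2

def Pos (Q : T3) : Prop := ∀ x y z : ℤ, (x ≠ 0 ∨ y ≠ 0 ∨ z ≠ 0) → 0 < Q.val x y z

def Prim (x y z : ℤ) : Prop := Int.gcd (Int.gcd x y : ℤ) z = 1

def D3 (u1 u2 u3 v1 v2 v3 w1 w2 w3 : ℤ) : ℤ :=
  u1*(v2*w3 - v3*w2) - v1*(u2*w3 - u3*w2) + w1*(u2*v3 - u3*v2)

def tr (Q : T3) (u1 u2 u3 v1 v2 v3 w1 w2 w3 : ℤ) : T3 :=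
  ⟨Q.val u1 u2 u3, Q.val v1 v2 v3, Q.val w1 w2 w3,
   Q.bil u1 u2 u3 v1 v2 v3, Q.bil u1 u2 u3 w1 w2 w3, Q.bil v1 v2 v3 w1 w2 w3⟩

lemma tr_val (Q : T3) (u1 u2 u3 v1 v2 v3 w1 w2 w3 x y z : ℤ) :
    (Q.tr u1 u2 u3 v1 v2 v3 w1 w2 w3).val x y z
      = Q.val (u1*x+v1*y+w1*z) (u2*x+v2*y+w2*z) (u3*x+v3*y+w3*z) := by
  simp only [tr, val, bil]; ring

lemma tr_det (Q : T3) (u1 u2 u3 v1 v2 v3 w1 w2 w3 : ℤ) :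
    (Q.tr u1 u2 u3 v1 v2 v3 w1 w2 w3).det
      = (D3 u1 u2 u3 v1 v2 v3 w1 w2 w3)^2 * Q.det := by
  simp only [tr, det, val, bil, D3]; ring

lemma val_e1 (Q : T3) : Q.val 1 0 0 = Q.a := by simp [val]

lemma prim_iff (x y z : ℤ) :
    Prim x y z ↔ ∀ k : ℤ, k ∣ x → k ∣ y → k ∣ z → k ∣ 1 := by
  constructor
  · intro h k hx hy hz
    have h1 : k ∣ (Int.gcd x y : ℤ) := Int.dvd_coe_gcd hx hy
    have h2 := Int.dvd_coe_gcd h1 hz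
    rwa [h] at h2
  · intro h
    have h1 : (Int.gcd (Int.gcd x y : ℤ) z : ℤ) ∣ 1 := by
      refine h _ (dvd_trans (Int.gcd_dvd_left _ _) (Int.gcd_dvd_left _ _))
        (dvd_trans (Int.gcd_dvd_left _ _) (Int.gcd_dvd_right _ _)) (Int.gcd_dvd_right _ _)
    have := Int.isUnit_iff.mp (isUnit_of_dvd_one h1)
    unfold Prim
    omega

lemma prim_ne_zero {x y z : ℤ} (h : Prim x y z) : x ≠ 0 ∨ y ≠ 0 ∨ z ≠ 0 := by
  by_contra hc
  push_neg at hc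
  obtain ⟨h1, h2, h3⟩ := hc
  unfold Prim at h
  rw [h1, h2, h3] at h
  simp [Int.gcd] at h

lemma prim_e1 : Prim 1 0 0 := by simp [Prim, Int.gcd]

lemma prim_of_prim2 (x y z : ℤ) (h : B2.Prim y z) : Prim x y z := by
  rw [prim_iff]
  rw [B2.prim_iff] at h
  exact fun k _ hy hz => h k hy hz

/-- transport of primitivity under a unimodular substitution -/
lemma tr_prim {u1 u2 u3 v1 v2 v3 w1 w2 w3 : ℤ}
    (hU : D3 u1 u2 u3 v1 v2 v3 w1 w2 w3 = 1) (x y z : ℤ) :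
    Prim x y z ↔ Prim (u1*x+v1*y+w1*z) (u2*x+v2*y+w2*z) (u3*x+v3*y+w3*z) := by
  rw [prim_iff, prim_iff]
  constructor
  · intro h k h1 h2 h3
    refine h k ?_ ?_ ?_
    · have hid : (v2*w3-v3*w2)*(u1*x+v1*y+w1*z) - (v1*w3-v3*w1)*(u2*x+v2*y+w2*z)
          + (v1*w2-v2*w1)*(u3*x+v3*y+w3*z) = x := by
        simp only [D3] at hU; linear_combination x * hU
      rw [← hid]
      exact dvd_add (dvd_sub (h1.mul_left _) (h2.mul_left _)) (h3.mul_left _)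
    · have hid : -((u2*w3-u3*w2))*(u1*x+v1*y+w1*z) + (u1*w3-u3*w1)*(u2*x+v2*y+w2*z)
          - (u1*w2-u2*w1)*(u3*x+v3*y+w3*z) = y := by
        simp only [D3] at hU; linear_combination y * hU
      rw [← hid]
      exact dvd_sub (dvd_add (h1.mul_left _) (h2.mul_left _)) (h3.mul_left _)
    · have hid : (u2*v3-u3*v2)*(u1*x+v1*y+w1*z) - (u1*v3-u3*v1)*(u2*x+v2*y+w2*z)
          + (u1*v2-u2*v1)*(u3*x+v3*y+w3*z) = z := by
        simp only [D3] at hU; linear_combination z * hU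
      rw [← hid]
      exact dvd_add (dvd_sub (h1.mul_left _) (h2.mul_left _)) (h3.mul_left _)
  · intro h k h1 h2 h3
    exact h k (dvd_add (dvd_add (h1.mul_left _) (h2.mul_left _)) (h3.mul_left _))
      (dvd_add (dvd_add (h1.mul_left _) (h2.mul_left _)) (h3.mul_left _))
      (dvd_add (dvd_add (h1.mul_left _) (h2.mul_left _)) (h3.mul_left _))

lemma tr_pos {Q : T3} {u1 u2 u3 v1 v2 v3 w1 w2 w3 : ℤ}
    (hU : D3 u1 u2 u3 v1 v2 v3 w1 w2 w3 = 1) (hQ : Q.Pos) :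
    (Q.tr u1 u2 u3 v1 v2 v3 w1 w2 w3).Pos := by
  intro x y z hxyz
  rw [tr_val]
  refine hQ _ _ _ ?_
  by_contra hc
  push_neg at hc
  obtain ⟨hc1, hc2, hc3⟩ := hc
  simp only [D3] at hU
  have hx : x = 0 := by
    have hid : (v2*w3-v3*w2)*(u1*x+v1*y+w1*z) - (v1*w3-v3*w1)*(u2*x+v2*y+w2*z)
        + (v1*w2-v2*w1)*(u3*x+v3*y+w3*z) = x := by linear_combination x * hU
    rw [hc1, hc2, hc3] at hid; linarith
  have hy : y = 0 := by
    have hid : -((u2*w3-u3*w2))*(u1*x+v1*y+w1*z) + (u1*w3-u3*w1)*(u2*x+v2*y+w2*z)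
        - (u1*w2-u2*w1)*(u3*x+v3*y+w3*z) = y := by linear_combination y * hU
    rw [hc1, hc2, hc3] at hid; linarith
  have hz : z = 0 := by
    have hid : (u2*v3-u3*v2)*(u1*x+v1*y+w1*z) - (u1*v3-u3*v1)*(u2*x+v2*y+w2*z)
        + (u1*v2-u2*v1)*(u3*x+v3*y+w3*z) = z := by linear_combination z * hU
    rw [hc1, hc2, hc3] at hid; linarith
  rcases hxyz with h | h | h
  exacts [h hx, h hy, h hz]

lemma tr_surj {Q : T3} {u1 u2 u3 v1 v2 v3 w1 w2 w3 : ℤ}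
    (hU : D3 u1 u2 u3 v1 v2 v3 w1 w2 w3 = 1) (x y z : ℤ) :
    ∃ x' y' z', (Q.tr u1 u2 u3 v1 v2 v3 w1 w2 w3).val x' y' z' = Q.val x y z := by
  simp only [D3] at hU
  refine ⟨(v2*w3-v3*w2)*x - (v1*w3-v3*w1)*y + (v1*w2-v2*w1)*z,
          -((u2*w3-u3*w2))*x + (u1*w3-u3*w1)*y - (u1*w2-u2*w1)*z,
          (u2*v3-u3*v2)*x - (u1*v3-u3*v1)*y + (u1*v2-u2*v1)*z, ?_⟩
  rw [tr_val]
  have e1 : u1*((v2*w3-v3*w2)*x - (v1*w3-v3*w1)*y + (v1*w2-v2*w1)*z)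
      + v1*(-((u2*w3-u3*w2))*x + (u1*w3-u3*w1)*y - (u1*w2-u2*w1)*z)
      + w1*((u2*v3-u3*v2)*x - (u1*v3-u3*v1)*y + (u1*v2-u2*v1)*z) = x := by
    linear_combination x * hU
  have e2 : u2*((v2*w3-v3*w2)*x - (v1*w3-v3*w1)*y + (v1*w2-v2*w1)*z)
      + v2*(-((u2*w3-u3*w2))*x + (u1*w3-u3*w1)*y - (u1*w2-u2*w1)*z)
      + w2*((u2*v3-u3*v2)*x - (u1*v3-u3*v1)*y + (u1*v2-u2*v1)*z) = y := by
    linear_combination y * hU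
  have e3 : u3*((v2*w3-v3*w2)*x - (v1*w3-v3*w1)*y + (v1*w2-v2*w1)*z)
      + v3*(-((u2*w3-u3*w2))*x + (u1*w3-u3*w1)*y - (u1*w2-u2*w1)*z)
      + w3*((u2*v3-u3*v2)*x - (u1*v3-u3*v1)*y + (u1*v2-u2*v1)*z) = z := by
    linear_combination z * hU
  rw [e1, e2, e3]

/-- minimum of a positive form over primitive vectors -/
lemma exists_min (Q : T3) (hQ : Q.Pos) :
    ∃ x y z : ℤ, Prim x y z ∧ ∀ x' y' z', Prim x' y' z' → Q.val x y z ≤ Q.val x' y' z' := by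
  set S : Set ℕ := {k | ∃ x y z, Prim x y z ∧ Q.val x y z = (k : ℤ)} with hS
  have hne : S.Nonempty := by
    refine ⟨(Q.val 1 0 0).toNat, 1, 0, 0, prim_e1, ?_⟩
    rw [Int.toNat_of_nonneg (le_of_lt (hQ 1 0 0 (by simp)))]
  obtain ⟨x, y, z, hprim, hval⟩ := Nat.sInf_mem hne
  refine ⟨x, y, z, hprim, fun x' y' z' h' => ?_⟩
  have hmem : (Q.val x' y' z').toNat ∈ S := by
    refine ⟨x', y', z', h', ?_⟩
    rw [Int.toNat_of_nonneg (le_of_lt (hQ x' y' z' (prim_ne_zero h')))]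
  have := Nat.sInf_le hmem
  have h2 : ((Q.val x' y' z').toNat : ℤ) = Q.val x' y' z' :=
    Int.toNat_of_nonneg (le_of_lt (hQ x' y' z' (prim_ne_zero h')))
  omega

/-- completion of a primitive vector to a unimodular matrix -/
lemma completion3 {p q r : ℤ} (h : Prim p q r) :
    ∃ v1 v2 v3 w1 w2 w3, D3 p q r v1 v2 v3 w1 w2 w3 = 1 := by
  by_cases hg : Int.gcd p q = 0
  · obtain ⟨hp0, hq0⟩ := Int.gcd_eq_zero_iff.mp hg
    have hr : r = 1 ∨ r = -1 := by
      unfold Prim at h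
      rw [hg] at h
      push_cast at h
      rw [Int.gcd_zero_left] at h
      rcases Int.natAbs_eq r with h' | h' <;> omega
    refine ⟨1, 0, 0, 0, r, 0, ?_⟩
    subst hp0; subst hq0
    rcases hr with h' | h' <;> subst h' <;> simp [D3]
  · have hgpos : 0 < Int.gcd p q := Nat.pos_of_ne_zero hg
    set g : ℤ := (Int.gcd p q : ℤ) with hgdef
    have hgz : g ≠ 0 := by
      simp only [hgdef]
      exact_mod_cast hg
    set α := Int.gcdA p q with hα
    set β := Int.gcdB p q with hβ
    have hbez : g = p*α + q*β := Int.gcd_eq_gcd_ab p q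
    set p₁ := p / g with hp₁
    set q₁ := q / g with hq₁
    have e1 : p = g * p₁ := (Int.mul_ediv_cancel' (Int.gcd_dvd_left _ _ : g ∣ p)).symm
    have e2 : q = g * q₁ := (Int.mul_ediv_cancel' (Int.gcd_dvd_right _ _ : g ∣ q)).symm
    have e3 : p₁*α + q₁*β = 1 := by
      have h4 : g * (p₁*α + q₁*β) = g * 1 := by
        rw [mul_one]
        nth_rewrite 2 [hbez]
        rw [e1, e2]; ring
      exact mul_left_cancel₀ hgz h4
    have hgr : Int.gcd g r = 1 := h
    have hbez2 := Int.gcd_eq_gcd_ab g r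
    rw [hgr] at hbez2
    push_cast at hbez2
    set lam := Int.gcdA g r with hlam
    set mu := Int.gcdB g r with hmu
    have e4 : g*lam + r*mu = 1 := by linear_combination -hbez2
    refine ⟨-β, α, 0, -(mu*p₁), -(mu*q₁), lam, ?_⟩
    simp only [D3]
    rw [e1, e2]
    linear_combination (g*lam + r*mu) * e3 + e4


lemma split (Q : T3) (X Y Z : ℤ) :
    Q.a * Q.val X Y Z = (Q.a*X + Q.d*Y + Q.e*Z)^2
      + (B2.mk (Q.a*Q.b - Q.d^2) (Q.a*Q.f - Q.d*Q.e) (Q.a*Q.c - Q.e^2)).val Y Z := by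
  simp only [val, B2.val]; ring

lemma subdet (Q : T3) :
    (B2.mk (Q.a*Q.b - Q.d^2) (Q.a*Q.f - Q.d*Q.e) (Q.a*Q.c - Q.e^2)).det
      = Q.a * Q.det := by
  simp only [B2.det, det]; ring

/-- extracting the primitive part of a nonzero integer vector -/
lemma prim_extract (y z : ℤ) (h : y ≠ 0 ∨ z ≠ 0) :
    ∃ k y' z', B2.Prim y' z' ∧ y = k*y' ∧ z = k*z' := by
  have hg0 : Int.gcd y z ≠ 0 := by
    intro hc
    obtain ⟨h1, h2⟩ := Int.gcd_eq_zero_iff.mp hc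
    tauto
  have hgpos : 0 < Int.gcd y z := Nat.pos_of_ne_zero hg0
  refine ⟨(Int.gcd y z : ℤ), y / (Int.gcd y z : ℤ), z / (Int.gcd y z : ℤ), ?_, ?_, ?_⟩
  · exact Int.gcd_div_gcd_div_gcd hgpos
  · exact (Int.mul_ediv_cancel' (Int.gcd_dvd_left _ _)).symm
  · exact (Int.mul_ediv_cancel' (Int.gcd_dvd_right _ _)).symm

/-- **Main reduction theorem**: a positive definite integral ternary form of
determinant 1 represents only sums of three squares. -/
theorem main (Q : T3) (hQ : Q.Pos) (hdet : Q.det = 1) (x y z : ℤ) :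
    ∃ u v w, Q.val x y z = u^2 + v^2 + w^2 := by
  obtain ⟨x₀, y₀, z₀, hprim, hmin⟩ := exists_min Q hQ
  set m := Q.val x₀ y₀ z₀ with hm
  have hmpos : 0 < m := hQ _ _ _ (prim_ne_zero hprim)
  obtain ⟨v1, v2, v3, w1, w2, w3, hU1⟩ := completion3 hprim
  set Q₁ := Q.tr x₀ y₀ z₀ v1 v2 v3 w1 w2 w3 with hQ₁def
  have hQ₁a : Q₁.a = m := rfl
  have hQ₁pos : Q₁.Pos := tr_pos hU1 hQ
  have hQ₁det : Q₁.det = 1 := by rw [hQ₁def, tr_det, hU1, hdet]; ring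
  have hQ₁min : ∀ p q r, Prim p q r → m ≤ Q₁.val p q r := by
    intro p q r h
    rw [hQ₁def, tr_val]
    exact hmin _ _ _ ((tr_prim hU1 p q r).mp h)
  -- shear reducing the coefficient d
  obtain ⟨s, hs1, hs2⟩ := round_lemma m Q₁.d hmpos
  have hU2 : D3 1 0 0 s 1 0 0 0 1 = 1 := by simp [D3]
  set Q₂ := Q₁.tr 1 0 0 s 1 0 0 0 1 with hQ₂def
  have hQ₂a : Q₂.a = m := by
    show Q₁.val 1 0 0 = m
    rw [val_e1, hQ₁a]
  have hQ₂d : Q₂.d = Q₁.d + m*s := by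
    show Q₁.bil 1 0 0 s 1 0 = Q₁.d + m*s
    simp only [bil]
    rw [hQ₁a]; ring
  have hQ₂e : Q₂.e = Q₁.e := by
    show Q₁.bil 1 0 0 0 0 1 = Q₁.e
    simp only [bil]; ring
  have hQ₂pos : Q₂.Pos := tr_pos hU2 hQ₁pos
  have hQ₂det : Q₂.det = 1 := by rw [hQ₂def, tr_det, hU2, hQ₁det]; ring
  have hQ₂min : ∀ p q r, Prim p q r → m ≤ Q₂.val p q r := by
    intro p q r h
    rw [hQ₂def, tr_val]
    exact hQ₁min _ _ _ ((tr_prim hU2 p q r).mp h)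
  have hd2 : -m ≤ 2*Q₂.d ∧ 2*Q₂.d ≤ m := by
    rw [hQ₂d]; exact ⟨by linarith, by linarith⟩
  -- shear reducing the coefficient e
  obtain ⟨t, ht1, ht2⟩ := round_lemma m Q₂.e hmpos
  have hU3 : D3 1 0 0 0 1 0 t 0 1 = 1 := by simp [D3]
  set Q₃ := Q₂.tr 1 0 0 0 1 0 t 0 1 with hQ₃def
  have hQ₃a : Q₃.a = m := by
    show Q₂.val 1 0 0 = m
    rw [val_e1, hQ₂a]
  have hQ₃d : Q₃.d = Q₂.d := by
    show Q₂.bil 1 0 0 0 1 0 = Q₂.d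
    simp only [bil]; ring
  have hQ₃e : Q₃.e = Q₂.e + m*t := by
    show Q₂.bil 1 0 0 t 0 1 = Q₂.e + m*t
    simp only [bil]
    rw [hQ₂a]; ring
  have hQ₃pos : Q₃.Pos := tr_pos hU3 hQ₂pos
  have hQ₃det : Q₃.det = 1 := by rw [hQ₃def, tr_det, hU3, hQ₂det]; ring
  have hQ₃min : ∀ p q r, Prim p q r → m ≤ Q₃.val p q r := by
    intro p q r h
    rw [hQ₃def, tr_val]
    exact hQ₂min _ _ _ ((tr_prim hU3 p q r).mp h)
  have hd3 : -m ≤ 2*Q₃.d ∧ 2*Q₃.d ≤ m := by rw [hQ₃d]; exact hd2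
  have he3 : -m ≤ 2*Q₃.e ∧ 2*Q₃.e ≤ m := by
    rw [hQ₃e]; exact ⟨by linarith, by linarith⟩
  -- the binary subform
  set G := B2.mk (Q₃.a*Q₃.b - Q₃.d^2) (Q₃.a*Q₃.f - Q₃.d*Q₃.e) (Q₃.a*Q₃.c - Q₃.e^2)
    with hGdef
  have hGdet : G.det = m := by
    rw [hGdef, subdet, hQ₃a, hQ₃det, mul_one]
  have hGpos : G.Pos := by
    intro Y Z hYZ
    obtain ⟨k, Y', Z', hp, hY, hZ⟩ := prim_extract Y Z hYZ
    have hk : k ≠ 0 := by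
      intro hc
      rw [hc, zero_mul] at hY hZ
      tauto
    obtain ⟨X', hx1, hx2⟩ := round_lemma m (Q₃.d*Y' + Q₃.e*Z') hmpos
    have hval : m ≤ Q₃.val X' Y' Z' := hQ₃min _ _ _ (prim_of_prim2 _ _ _ hp)
    have hid := split Q₃ X' Y' Z'
    rw [← hGdef, hQ₃a] at hid
    have hw : (2*(m*X' + (Q₃.d*Y' + Q₃.e*Z')))^2 ≤ m^2 := by nlinarith
    have hpos' : 0 < G.val Y' Z' := by
      have h4 : 4 * (m * Q₃.val X' Y' Z')
          = (2*(m*X' + (Q₃.d*Y' + Q₃.e*Z')))^2 + 4 * G.val Y' Z' := by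
        linear_combination 4 * hid
      nlinarith
    rw [hY, hZ, B2.val_smul]
    have hk2 : 0 < k^2 := by positivity
    positivity
  -- binary minimum and the two Hermite inequalities
  obtain ⟨p₀, q₀, hbp, hbmin⟩ := B2.exists_min G hGpos
  set μ := G.val p₀ q₀ with hμ
  have hμpos : 0 < μ := hGpos _ _ (B2.prim_ne_zero hbp)
  have hbound : 3 * μ^2 ≤ 4 * m := by
    have := B2.min_bound G hGpos p₀ q₀ hbp hbmin
    rwa [hGdet] at this
  have hbound2 : 3 * m^2 ≤ 4 * μ := by
    obtain ⟨X₀, hx1, hx2⟩ := round_lemma m (Q₃.d*p₀ + Q₃.e*q₀) hmpos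
    have hval : m ≤ Q₃.val X₀ p₀ q₀ := hQ₃min _ _ _ (prim_of_prim2 _ _ _ hbp)
    have hid := split Q₃ X₀ p₀ q₀
    rw [← hGdef, hQ₃a] at hid
    have h4 : 4 * (m * Q₃.val X₀ p₀ q₀)
        = (2*(m*X₀ + (Q₃.d*p₀ + Q₃.e*q₀)))^2 + 4 * μ := by
      rw [hμ]
      linear_combination 4 * hid
    nlinarith
  have hm1 : m = 1 := by
    have h9 : 27 * m^4 ≤ 64 * m := by nlinarith
    nlinarith
  -- now the form splits off a square
  have hd0 : Q₃.d = 0 := by omega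
  have he0 : Q₃.e = 0 := by omega
  have ha1 : Q₃.a = 1 := by rw [hQ₃a, hm1]
  set Bf := B2.mk Q₃.b Q₃.f Q₃.c with hBf
  have hBdet : Bf.det = 1 := by
    have h1 : Q₃.det = Bf.det := by
      simp only [det, hBf, B2.det]
      rw [ha1, hd0, he0]; ring
    rw [← h1, hQ₃det]
  have hBpos : Bf.Pos := by
    intro Y Z hYZ
    have h1 : Q₃.val 0 Y Z = Bf.val Y Z := by
      simp only [val, hBf, B2.val]; ring
    rw [← h1]
    exact hQ₃pos 0 Y Z (by tauto)
  -- transport the original value through the three substitutions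
  obtain ⟨x₁, y₁, z₁, h1⟩ := tr_surj (Q := Q) hU1 x y z
  obtain ⟨x₂, y₂, z₂, h2⟩ := tr_surj (Q := Q₁) hU2 x₁ y₁ z₁
  obtain ⟨x₃, y₃, z₃, h3⟩ := tr_surj (Q := Q₂) hU3 x₂ y₂ z₂
  obtain ⟨u, v, huv⟩ := B2.main Bf hBpos hBdet y₃ z₃
  refine ⟨x₃, u, v, ?_⟩
  have hfin : Q₃.val x₃ y₃ z₃ = x₃^2 + Bf.val y₃ z₃ := by
    simp only [val, hBf, B2.val]
    rw [ha1, hd0, he0]; ring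
  rw [← h1, ← h2, ← h3, hfin, huv]; ring

end T3

/-! ### Arithmetic: every `n ≡ 1, 2 (mod 4)` is a sum of three squares -/

open ZMod

theorem sum3sq (n : ℕ) (h4 : n % 4 = 1 ∨ n % 4 = 2) :
    ∃ x y z : ℤ, (n : ℤ) = x^2 + y^2 + z^2 := by
  have hn1 : 1 ≤ n := by omega
  obtain ⟨k, hk⟩ : ∃ k : ℕ, (n % 2 = 1 ∧ k = 2) ∨ (n % 2 = 0 ∧ k = 1) := by
    by_cases h : n % 2 = 1
    · exact ⟨2, Or.inl ⟨h, rfl⟩⟩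
    · exact ⟨1, Or.inr ⟨by omega, rfl⟩⟩
  set c : ℕ := k*n - 1 with hcdef
  have hc1 : c + 1 = k*n := by rcases hk with ⟨h1,h2⟩|⟨h1,h2⟩ <;> subst h2 <;> omega
  have hcodd : c % 2 = 1 := by rcases hk with ⟨h1,h2⟩|⟨h1,h2⟩ <;> subst h2 <;> omega
  have hc8 : (n % 8 = 1 ∨ n % 8 = 5 → c % 8 = 1) ∧ (n % 8 = 2 → c % 8 = 1)
      ∧ (n % 8 = 6 → c % 8 = 5) := by
    rcases hk with ⟨h1,h2⟩|⟨h1,h2⟩ <;> subst h2 <;>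
      exact ⟨fun hh => by omega, fun hh => by omega, fun hh => by omega⟩
  have hcop2 : Nat.Coprime c 2 := by
    have h2 : ¬ (2 ∣ c) := by omega
    exact Nat.coprime_comm.mp (Nat.prime_two.coprime_iff_not_dvd.mpr h2)
  have hcopn : Nat.Coprime c n := by
    have hd := Nat.dvd_sub (Dvd.dvd.mul_left (Nat.gcd_dvd_right c n) k)
      (Nat.gcd_dvd_left c n)
    have h1 : k*n - c = 1 := by omega
    rw [h1] at hd
    exact Nat.dvd_one.mp hd
  have hcop : Nat.Coprime c (8*n) := by
    have h8 : Nat.Coprime c 8 := by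
      have h2 : (8:ℕ) = 2^3 := by norm_num
      rw [h2]
      exact hcop2.pow_right 3
    exact Nat.Coprime.mul_right h8 hcopn
  haveI : NeZero (8*n) := ⟨by omega⟩
  have hunit : IsUnit ((c:ℕ) : ZMod (8*n)) := (ZMod.isUnit_iff_coprime c (8*n)).mpr hcop
  obtain ⟨p, hpgt, hpp, hpz⟩ := Nat.forall_exists_prime_gt_and_eq_mod hunit (8*n)
  haveI : Fact p.Prime := ⟨hpp⟩
  haveI : NeZero p := ⟨hpp.pos.ne'⟩
  have hmod : p ≡ c [MOD 8*n] := (ZMod.natCast_eq_natCast_iff p c (8*n)).mp hpz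
  have hmod8 : p % 8 = c % 8 := Nat.ModEq.of_dvd ⟨n, rfl⟩ hmod
  have hmodn : p ≡ c [MOD n] := Nat.ModEq.of_dvd ⟨8, by ring⟩ hmod
  have hdvdn : n ∣ p + 1 := by
    have h1 : p + 1 ≡ c + 1 [MOD n] := hmodn.add_right 1
    rw [hc1] at h1
    have h2 : k*n ≡ 0 [MOD n] := (Nat.modEq_zero_iff_dvd).mpr ⟨k, mul_comm k n⟩
    exact (Nat.modEq_zero_iff_dvd).mp (h1.trans h2)
  have hp2 : 2 < p := by omega
  have hpodd : Odd p := hpp.odd_of_ne_two (by omega)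
  have hpnotn : ¬ (p ∣ n) := fun hd => by
    have := Nat.le_of_dvd (by omega) hd
    omega
  have hc8v : c % 8 = 1 ∨ c % 8 = 5 := by
    have h8v : n % 8 = 1 ∨ n % 8 = 5 ∨ n % 8 = 2 ∨ n % 8 = 6 := by omega
    rcases h8v with h|h|h|h
    · exact Or.inl (hc8.1 (Or.inl h))
    · exact Or.inl (hc8.1 (Or.inr h))
    · exact Or.inl (hc8.2.1 h)
    · exact Or.inr (hc8.2.2 h)
  have hp4 : p % 4 = 1 := by omega
  have hχ₄p : χ₄ p = 1 := ZMod.χ₄_nat_one_mod_four hp4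
  have hqr : ∀ b : ℕ, Odd b → jacobiSym (b : ℤ) p = jacobiSym (p : ℤ) b := by
    intro b hb
    rw [jacobiSym.quadratic_reciprocity' hb hpodd]
    have hq : qrSign p b = 1 := by
      show jacobiSym (χ₄ p : ℤ) b = 1
      rw [hχ₄p]
      exact jacobiSym.one_left b
    rw [hq, one_mul]
  have hpj : ∀ m : ℕ, m ∣ n → jacobiSym (p:ℤ) m = jacobiSym (-1 : ℤ) m := by
    intro m hmd
    apply jacobiSym.mod_left'
    obtain ⟨t, ht⟩ := hmd.trans hdvdn
    have h1 : (p:ℤ) = -1 + (m:ℤ)*t := by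
      have h2 : ((p + 1 : ℕ) : ℤ) = ((m*t : ℕ) : ℤ) := by rw [ht]
      push_cast at h2
      linarith
    rw [h1, Int.add_mul_emod_self_left]
  have hneg1 : jacobiSym (-1 : ℤ) p = 1 := by
    rw [jacobiSym.at_neg_one hpodd, hχ₄p]
  have hsplitj : jacobiSym (-(n:ℤ)) p = jacobiSym (-1) p * jacobiSym (n:ℤ) p := by
    rw [← jacobiSym.mul_left]
    norm_num
  have hjac : jacobiSym (-(n:ℤ)) p = 1 := by
    rcases hk with ⟨hodd, hk2⟩ | ⟨heven, hk1⟩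
    · have hn4 : n % 4 = 1 := by omega
      have hnodd : Odd n := Nat.odd_iff.mpr hodd
      rw [hsplitj, hneg1, hqr n hnodd, hpj n dvd_rfl, jacobiSym.at_neg_one hnodd,
        ZMod.χ₄_nat_one_mod_four hn4]
      norm_num
    · set m : ℕ := n / 2 with hmdef
      have hnm : n = 2*m := by omega
      have hmodd : Odd m := by
        refine Nat.odd_iff.mpr ?_
        omega
      have hs2 : jacobiSym (n:ℤ) p = jacobiSym 2 p * jacobiSym (m:ℤ) p := by
        rw [← jacobiSym.mul_left]
        congr 1
        rw [hnm]
        push_cast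
        ring
      have h6 : jacobiSym (p:ℤ) m = jacobiSym (-1:ℤ) m := hpj m ⟨2, by omega⟩
      have h7 : jacobiSym (2:ℤ) p = χ₈ p := jacobiSym.at_two hpodd
      have h8 : jacobiSym (-1:ℤ) m = χ₄ m := jacobiSym.at_neg_one hmodd
      have hpmod2 : p % 2 = 1 := Nat.odd_iff.mp hpodd
      have h8v : n % 8 = 2 ∨ n % 8 = 6 := by omega
      rcases h8v with hv | hv
      · have hp8 : p % 8 = 1 := by have := hc8.2.1 hv; omega
        have hχ8 : χ₈ p = 1 := by
          rw [ZMod.χ₈_nat_eq_if_mod_eight]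
          simp [hp8, hpmod2]
        have hχ4m : χ₄ m = 1 := ZMod.χ₄_nat_one_mod_four (by omega)
        rw [hsplitj, hneg1, hs2, h7, hχ8, hqr m hmodd, h6, h8, hχ4m]
        norm_num
      · have hp8 : p % 8 = 5 := by have := hc8.2.2 hv; omega
        have hχ8 : χ₈ p = -1 := by
          rw [ZMod.χ₈_nat_eq_if_mod_eight]
          simp [hp8, hpmod2]
        have hχ4m : χ₄ m = -1 := ZMod.χ₄_nat_three_mod_four (by omega)
        rw [hsplitj, hneg1, hs2, h7, hχ8, hqr m hmodd, h6, h8, hχ4m]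
        norm_num
  -- extract a square root of `-n` modulo `p`
  have hleg : legendreSym p (-(n:ℤ)) = 1 := by
    rw [jacobiSym.legendreSym.to_jacobiSym]
    exact hjac
  have hn0 : ((-(n:ℤ) : ℤ) : ZMod p) ≠ 0 := by
    rw [Ne, ZMod.intCast_zmod_eq_zero_iff_dvd, dvd_neg, Int.natCast_dvd_natCast]
    exact hpnotn
  obtain ⟨s, hs⟩ := (legendreSym.eq_one_iff p hn0).mp hleg
  have hnunit : ((n:ℕ) : ZMod p) ≠ 0 := by
    rw [Ne, ZMod.natCast_eq_zero_iff]
    exact hpnotn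
  set ρ : ZMod p := s * ((n:ℕ) : ZMod p)⁻¹ with hρ
  have hkey : ((n:ℕ) : ZMod p) * ρ^2 + 1 = 0 := by
    have hss : s * s = -((n:ℕ) : ZMod p) := by
      rw [← hs]
      push_cast
      ring
    have hinv : ((n:ℕ) : ZMod p) * ((n:ℕ) : ZMod p)⁻¹ = 1 := mul_inv_cancel₀ hnunit
    have h1 : ((n:ℕ) : ZMod p) * ρ^2 + 1
        = (s*s) * (((n:ℕ) : ZMod p)⁻¹ * (((n:ℕ) : ZMod p) * ((n:ℕ) : ZMod p)⁻¹)) + 1 := by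
      rw [hρ]; ring
    rw [h1, hinv, mul_one, hss, neg_mul, hinv]
    ring
  set r : ℤ := (ρ.val : ℤ) with hrdef
  have hcast : ((r : ℤ) : ZMod p) = ρ := by
    rw [hrdef]
    push_cast
    exact ZMod.natCast_rightInverse ρ
  have hdvd : (p:ℤ) ∣ (n:ℤ)*r^2 + 1 := by
    rw [← ZMod.intCast_zmod_eq_zero_iff_dvd]
    have h2 : (((n:ℤ)*r^2 + 1 : ℤ) : ZMod p) = ((n:ℕ) : ZMod p) * ρ^2 + 1 := by
      push_cast
      rw [show (((ρ.val : ℤ) : ZMod p)) = ρ from hcast]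
    rw [h2, hkey]
  obtain ⟨t, ht⟩ := hdvdn
  have htpos : 1 ≤ t := by
    rcases Nat.eq_zero_or_pos t with h | h
    · subst h; omega
    · exact h
  have hNpos : (0:ℤ) < (n:ℤ) := by exact_mod_cast hn1
  have hPpos : (0:ℤ) < (p:ℤ) := by exact_mod_cast hpp.pos
  have hP : (p:ℤ) = (n:ℤ)*(t:ℤ) - 1 := by
    have h2 : ((p + 1 : ℕ) : ℤ) = ((n*t : ℕ) : ℤ) := by rw [ht]
    push_cast at h2
    linarith
  set c' : ℤ := ((n:ℤ)*r^2 + 1) / (p:ℤ) with hc'def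
  have hc' : (p:ℤ) * c' = (n:ℤ)*r^2 + 1 := Int.mul_ediv_cancel' hdvd
  have hc'pos : 1 ≤ c' := by nlinarith [sq_nonneg r]
  set QF : T3 := ⟨(n:ℤ), (t:ℤ), c', 1, 0, r⟩ with hQF
  have hdet : QF.det = 1 := by
    show (n:ℤ)*(t:ℤ)*c' + 2*1*0*r - (n:ℤ)*r^2 - (t:ℤ)*0^2 - c'*1^2 = 1
    linear_combination hc' - c' * hP
  have hkey2 : ∀ X Y Z : ℤ, (n:ℤ)*(p:ℤ)*(QF.val X Y Z)
      = (p:ℤ)*((n:ℤ)*X+Y)^2 + ((p:ℤ)*Y + (n:ℤ)*r*Z)^2 + (n:ℤ)*Z^2 := by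
    intro X Y Z
    show (n:ℤ)*(p:ℤ)*((n:ℤ)*X^2 + (t:ℤ)*Y^2 + c'*Z^2 + 2*(1*X*Y + 0*X*Z + r*Y*Z)) = _
    linear_combination (-(p:ℤ)*Y^2) * hP + ((n:ℤ)*Z^2) * hc'
  have hpos : QF.Pos := by
    intro X Y Z hne
    by_contra hcon
    push_neg at hcon
    have h1 := hkey2 X Y Z
    have t1 : (0:ℤ) ≤ (p:ℤ)*((n:ℤ)*X+Y)^2 := by positivity
    have t2 : (0:ℤ) ≤ ((p:ℤ)*Y + (n:ℤ)*r*Z)^2 := sq_nonneg _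
    have t3 : (0:ℤ) ≤ (n:ℤ)*Z^2 := by positivity
    have hle : (n:ℤ)*(p:ℤ)*(QF.val X Y Z) ≤ 0 := by
      have hnp : (0:ℤ) < (n:ℤ)*(p:ℤ) := mul_pos hNpos hPpos
      have h5 := mul_le_mul_of_nonneg_left hcon (le_of_lt hnp)
      simpa [mul_assoc] using h5
    have hZ0 : Z = 0 := by
      have h2 : (n:ℤ)*Z^2 = 0 := by linarith
      have h3 : Z^2 = 0 := by
        rcases mul_eq_zero.mp h2 with h | h
        · exact absurd h hNpos.ne'
        · exact h
      exact pow_eq_zero_iff (two_ne_zero) |>.mp h3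
    have hY0 : Y = 0 := by
      have h2 : ((p:ℤ)*Y + (n:ℤ)*r*Z)^2 = 0 := by linarith
      have h3 := pow_eq_zero_iff (two_ne_zero) |>.mp h2
      rw [hZ0] at h3
      have h4 : (p:ℤ)*Y = 0 := by linear_combination h3
      rcases mul_eq_zero.mp h4 with h | h
      · exact absurd h hPpos.ne'
      · exact h
    have hX0 : X = 0 := by
      have h2 : (p:ℤ)*((n:ℤ)*X+Y)^2 = 0 := by linarith
      have h3 : ((n:ℤ)*X+Y)^2 = 0 := by
        rcases mul_eq_zero.mp h2 with h | h
        · exact absurd h hPpos.ne'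
        · exact h
      have h4 := pow_eq_zero_iff (two_ne_zero) |>.mp h3
      rw [hY0] at h4
      have h5 : (n:ℤ)*X = 0 := by linarith
      rcases mul_eq_zero.mp h5 with h | h
      · exact absurd h hNpos.ne'
      · exact h
    rcases hne with h | h | h
    exacts [h hX0, h hY0, h hZ0]
  obtain ⟨u, v, w, huvw⟩ := T3.main QF hpos hdet 1 0 0
  refine ⟨u, v, w, ?_⟩
  rw [← huvw, T3.val_e1]


end TSQ

theorem stmt16 (a : ℤ) (ha : 1 < a) (n : ℕ) :
    ∃ x y z : ℤ, (n : ℤ) = ⌊((x^2 + y^2 + z^2 : ℤ) : ℚ)/a⌋ := by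
  set M : ℤ := a * n with hM
  have hM0 : 0 ≤ M := by positivity
  obtain ⟨N, hrange1, hrange2, hN4⟩ :
      ∃ N : ℤ, M ≤ N ∧ N < M + a ∧ (N % 4 = 1 ∨ N % 4 = 2) := by
    have h4 : M % 4 = 0 ∨ M % 4 = 1 ∨ M % 4 = 2 ∨ M % 4 = 3 := by omega
    rcases h4 with h | h | h | h
    · exact ⟨M + 1, by omega, by omega, by omega⟩
    · exact ⟨M, le_refl M, by omega, by omega⟩
    · exact ⟨M, le_refl M, by omega, by omega⟩
    · have haodd : a % 2 = 1 := by
        rcases Int.even_or_odd a with he | ho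
        · exfalso
          obtain ⟨r, hr⟩ := he
          have h2 : M = 2*(r*(n:ℤ)) := by rw [hM, hr]; ring
          omega
        · obtain ⟨r, hr⟩ := ho
          omega
      exact ⟨M + 2, by omega, by omega, by omega⟩
  obtain ⟨m, hmN, hm4⟩ : ∃ m : ℕ, (m:ℤ) = N ∧ (m % 4 = 1 ∨ m % 4 = 2) := by
    refine ⟨N.toNat, ?_, ?_⟩ <;> omega
  obtain ⟨x, y, z, hxyz⟩ := TSQ.sum3sq m hm4
  rw [hxyz] at hmN
  refine ⟨x, y, z, ?_⟩
  rw [hmN]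
  have haq : (0:ℚ) < (a:ℚ) := by
    have : (0:ℤ) < a := lt_trans zero_lt_one ha
    exact_mod_cast this
  symm
  rw [Int.floor_eq_iff]
  constructor
  · rw [le_div_iff₀ haq]
    have h1 : (n:ℤ)*a ≤ N := by rw [hM] at hrange1; linarith
    exact_mod_cast h1
  · rw [div_lt_iff₀ haq]
    have h2 : N < ((n:ℤ) + 1)*a := by rw [hM] at hrange2; linarith
    exact_mod_cast h2
end
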